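/- arXiv:2402.13087 — 8 statements merged into one kernel-verified Lean document; each statement's English description precedes it below -/
import Mathlib

section
/- Let Γ be a finite type, let p and p' be probability mass functions on Γ with p'(γ) > 0 for every γ ∈ Γ, let k ≥ 1 be an integer, and let α > 1 be real. Let ĝ : Γ → ℝ be any score function (possibly not injective), and let g* : Γ → ℝ be any injective score function refining the weak order of ĝ, i.e. ĝ(x) < ĝ(y) implies g*(x) < g*(y) for all x, y ∈ Γ. Then D_α(F_{k,ĝ}[p] ‖ F_{k,ĝ}[p']) ≤ D_α(F_{k,g*}[p] ‖ F_{k,g*}[p']). In particular, since an injective refinement of any score function exists on a finite type, for every non-injective ĝ there exists an injective g* with D_α(F_{k,ĝ}[p] ‖ F_{k,ĝ}[p']) ≤ D_α(F_{k,g*}[p] ‖ F_{k,g*}[p']). -/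
open scoped Classical BigOperators

/-- Rényi divergence of order `α` between two pmfs `M`, `N` on a finite type:
`D_α(M‖N) = (1/(α−1))·log(Σ_x M(x)^α·N(x)^{1−α})` (real powers). -/
noncomputable def renyiDiv {Γ : Type*} [Fintype Γ] (α : ℝ) (M N : Γ → ℝ) : ℝ :=
  (1 / (α - 1)) * Real.log (∑ x, M x ^ α * N x ^ (1 - α))

/-- Best-of-`k` selection distribution with uniform tie-breaking: given a pmf `p` on a
finite type `Γ`, a score function `g`, and `k`, the probability of outputting `γ` is
`(1/|{i : g i = g γ}|)·[(Σ_{i : g i ≤ g γ} p i)^k − (Σ_{i : g i < g γ} p i)^k]`. -/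
noncomputable def bestOfK {Γ : Type*} [Fintype Γ] (p : Γ → ℝ) (g : Γ → ℝ) (k : ℕ)
    (γ : Γ) : ℝ :=
  (1 / (Finset.univ.filter (fun i => g i = g γ)).card) *
    ((∑ i ∈ Finset.univ.filter (fun i => g i ≤ g γ), p i) ^ k -
      (∑ i ∈ Finset.univ.filter (fun i => g i < g γ), p i) ^ k)

open Finset

private lemma holder_sub {ι : Type*} (s : Finset ι) (a b : ι → ℝ)
    (ha : ∀ i ∈ s, 0 ≤ a i) (hb : ∀ i ∈ s, 0 < b i) {α : ℝ} (hα : 1 < α) :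
    (∑ i ∈ s, a i) ^ α * (∑ i ∈ s, b i) ^ (1 - α) ≤
      ∑ i ∈ s, a i ^ α * b i ^ (1 - α) := by
  have hα0 : (0:ℝ) < α := by linarith
  rcases s.eq_empty_or_nonempty with rfl | hS
  · simp only [sum_empty]
    rw [Real.zero_rpow (by linarith : α ≠ 0), zero_mul]
  have hq : Real.HolderConjugate α (α / (α - 1)) := by
    rw [Real.holderConjugate_iff]
    constructor
    · exact hα
    · rw [inv_div]
      field_simp
      ring
  have key := Real.inner_le_Lp_mul_Lq (s := s)
    (f := fun i => a i * b i ^ ((1 - α) / α)) (g := fun i => b i ^ ((α - 1) / α)) hq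
  rw [Finset.sum_congr rfl (fun i hi => show
        (a i * b i ^ ((1 - α) / α)) * (b i ^ ((α - 1) / α)) = a i by
      rw [mul_assoc, ← Real.rpow_add (hb i hi), show (1-α)/α + (α-1)/α = 0 by ring,
        Real.rpow_zero, mul_one]),
    Finset.sum_congr rfl (fun i hi => show
        |a i * b i ^ ((1 - α) / α)| ^ α = a i ^ α * b i ^ (1 - α) by
      rw [abs_of_nonneg (mul_nonneg (ha i hi) (Real.rpow_nonneg (hb i hi).le _)),
        Real.mul_rpow (ha i hi) (Real.rpow_nonneg (hb i hi).le _),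
        ← Real.rpow_mul (hb i hi).le, div_mul_cancel₀ _ (ne_of_gt hα0)]),
    Finset.sum_congr rfl (fun i hi => show
        |b i ^ ((α - 1) / α)| ^ (α / (α - 1)) = b i by
      rw [abs_of_nonneg (Real.rpow_nonneg (hb i hi).le _),
        ← Real.rpow_mul (hb i hi).le, div_mul_div_comm,
        mul_comm (α - 1) α, div_self (ne_of_gt (by nlinarith : (0:ℝ) < α * (α - 1))), Real.rpow_one]),
    one_div_div] at key
  have hX : 0 ≤ ∑ i ∈ s, a i := sum_nonneg ha
  have hY : 0 ≤ ∑ i ∈ s, a i ^ α * b i ^ (1 - α) :=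
    sum_nonneg fun i hi => mul_nonneg (Real.rpow_nonneg (ha i hi) _)
      (Real.rpow_nonneg (hb i hi).le _)
  have hZ : 0 < ∑ i ∈ s, b i := sum_pos hb hS
  have h4 : (∑ i ∈ s, a i) ^ α ≤
      (∑ i ∈ s, a i ^ α * b i ^ (1 - α)) * (∑ i ∈ s, b i) ^ (α - 1) := by
    calc (∑ i ∈ s, a i) ^ α
        ≤ ((∑ i ∈ s, a i ^ α * b i ^ (1 - α)) ^ (1/α) * (∑ i ∈ s, b i) ^ ((α-1)/α)) ^ α :=
          Real.rpow_le_rpow hX key hα0.le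
      _ = ((∑ i ∈ s, a i ^ α * b i ^ (1 - α)) ^ (1/α)) ^ α *
            ((∑ i ∈ s, b i) ^ ((α-1)/α)) ^ α :=
          Real.mul_rpow (Real.rpow_nonneg hY _) (Real.rpow_nonneg hZ.le _)
      _ = _ := by
          rw [← Real.rpow_mul hY, ← Real.rpow_mul hZ.le, one_div_mul_cancel (ne_of_gt hα0),
            div_mul_cancel₀ _ (ne_of_gt hα0), Real.rpow_one]
  calc (∑ i ∈ s, a i) ^ α * (∑ i ∈ s, b i) ^ (1 - α)
      ≤ ((∑ i ∈ s, a i ^ α * b i ^ (1 - α)) * (∑ i ∈ s, b i) ^ (α - 1)) *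
          (∑ i ∈ s, b i) ^ (1 - α) :=
        mul_le_mul_of_nonneg_right h4 (Real.rpow_nonneg hZ.le _)
    _ = _ := by
        rw [mul_assoc, ← Real.rpow_add hZ, show α - 1 + (1 - α) = 0 by ring,
          Real.rpow_zero, mul_one]

private lemma telescope_sum {ι : Type*} [DecidableEq ι] (G : ℝ → ℝ) (q : ι → ℝ) (h : ι → ℝ) :
    ∀ S : Finset ι, Set.InjOn h S →
      (∑ x ∈ S, (G (∑ i ∈ S.filter fun i => h i ≤ h x, q i) -
          G (∑ i ∈ S.filter fun i => h i < h x, q i))) =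
        G (∑ i ∈ S, q i) - G 0 := by
  intro S
  induction S using Finset.strongInduction with
  | _ S ih =>
    intro hinj
    rcases S.eq_empty_or_nonempty with rfl | hS
    · simp
    obtain ⟨m, hmS, hmax⟩ := S.exists_max_image h hS
    have hxm : ∀ x ∈ S.erase m, h x < h m := fun x hx =>
      lt_of_le_of_ne (hmax x (mem_of_mem_erase hx))
        (fun he => (ne_of_mem_erase hx) (hinj (mem_of_mem_erase hx) hmS he))
    have h1 : S.filter (fun i => h i ≤ h m) = S := filter_true_of_mem fun i hi => hmax i hi
    have h2 : S.filter (fun i => h i < h m) = S.erase m := by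
      ext i
      simp only [mem_filter, mem_erase]
      constructor
      · rintro ⟨hi, hlt⟩
        exact ⟨fun he => absurd hlt (by rw [he]; exact lt_irrefl _), hi⟩
      · rintro ⟨hne, hi⟩
        exact ⟨hi, lt_of_le_of_ne (hmax i hi) fun he => hne (hinj hi hmS he)⟩
    have h3 : ∀ x ∈ S.erase m,
        S.filter (fun i => h i ≤ h x) = (S.erase m).filter (fun i => h i ≤ h x) := by
      intro x hx
      ext i
      simp only [mem_filter, mem_erase]
      constructor
      · rintro ⟨hi, hle⟩
        exact ⟨⟨fun he => absurd hle (by rw [he]; exact not_le.2 (hxm x hx)), hi⟩, hle⟩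
      · rintro ⟨⟨_, hi⟩, hle⟩
        exact ⟨hi, hle⟩
    have h4 : ∀ x ∈ S.erase m,
        S.filter (fun i => h i < h x) = (S.erase m).filter (fun i => h i < h x) := by
      intro x hx
      ext i
      simp only [mem_filter, mem_erase]
      constructor
      · rintro ⟨hi, hlt⟩
        exact ⟨⟨fun he => absurd hlt (by rw [he]; exact asymm (hxm x hx)), hi⟩, hlt⟩
      · rintro ⟨⟨_, hi⟩, hlt⟩
        exact ⟨hi, hlt⟩
    have h5 : (∑ x ∈ S.erase m, (G (∑ i ∈ S.filter fun i => h i ≤ h x, q i) -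
          G (∑ i ∈ S.filter fun i => h i < h x, q i))) =
        ∑ x ∈ S.erase m, (G (∑ i ∈ (S.erase m).filter fun i => h i ≤ h x, q i) -
          G (∑ i ∈ (S.erase m).filter fun i => h i < h x, q i)) :=
      Finset.sum_congr rfl fun x hx => by rw [h3 x hx, h4 x hx]
    rw [← Finset.add_sum_erase S _ hmS, h1, h2, h5,
      ih (S.erase m) (erase_ssubset hmS)
        (hinj.mono (Finset.coe_subset.2 (erase_subset m S)))]
    ring

private lemma sum_split {Γ : Type*} [Fintype Γ] (q : Γ → ℝ) (P Q R : Γ → Prop)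
    (h : ∀ i, P i ↔ Q i ∨ R i) (hd : ∀ i, Q i → R i → False) :
    ∑ i ∈ Finset.univ.filter (fun i => P i), q i =
      ∑ i ∈ Finset.univ.filter (fun i => Q i), q i +
        ∑ i ∈ Finset.univ.filter (fun i => R i), q i := by
  rw [← Finset.sum_union]
  · apply Finset.sum_congr _ fun _ _ => rfl
    ext i
    simp [h i]
  · rw [Finset.disjoint_left]
    intro i hi hi'
    simp only [Finset.mem_filter] at hi hi'
    exact hd i hi.2 hi'.2

private lemma bestOfK_inj {Γ : Type*} [Fintype Γ] (p : Γ → ℝ) {g : Γ → ℝ}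
    (hinj : Function.Injective g) (k : ℕ) (γ : Γ) :
    bestOfK p g k γ =
      (∑ i ∈ Finset.univ.filter (fun i => g i ≤ g γ), p i) ^ k -
        (∑ i ∈ Finset.univ.filter (fun i => g i < g γ), p i) ^ k := by
  have h : Finset.univ.filter (fun i => g i = g γ) = {γ} := by
    ext i
    simp [hinj.eq_iff]
  rw [bestOfK, h]
  simp

private lemma bestOfK_nonneg {Γ : Type*} [Fintype Γ] (p : Γ → ℝ) (hp0 : ∀ x, 0 ≤ p x)
    (g : Γ → ℝ) (k : ℕ) (x : Γ) : 0 ≤ bestOfK p g k x := by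
  apply mul_nonneg (by positivity)
  rw [sub_nonneg]
  apply pow_le_pow_left₀ (Finset.sum_nonneg fun i _ => hp0 i)
  apply Finset.sum_le_sum_of_subset_of_nonneg _ fun i _ _ => hp0 i
  intro i hi
  simp only [Finset.mem_filter, Finset.mem_univ, true_and] at hi ⊢
  exact hi.le

private lemma bestOfK_pos {Γ : Type*} [Fintype Γ] (p : Γ → ℝ) (hp0 : ∀ x, 0 ≤ p x)
    (g : Γ → ℝ) (k : ℕ) (hk : k ≠ 0) (x : Γ) (hx : 0 < p x) : 0 < bestOfK p g k x := by
  have hcard : 0 < (Finset.univ.filter (fun i => g i = g x)).card :=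
    Finset.card_pos.2 ⟨x, by simp⟩
  apply mul_pos (one_div_pos.2 (by exact_mod_cast hcard))
  rw [sub_pos]
  have hsplit := sum_split p (fun i => g i ≤ g x) (fun i => g i < g x) (fun i => g i = g x)
    (fun i => le_iff_lt_or_eq) (fun i h1 h2 => absurd h2 (ne_of_lt h1))
  have hB : 0 ≤ ∑ i ∈ Finset.univ.filter (fun i => g i < g x), p i :=
    Finset.sum_nonneg fun i _ => hp0 i
  have hS : p x ≤ ∑ i ∈ Finset.univ.filter (fun i => g i = g x), p i :=
    Finset.single_le_sum (fun i _ => hp0 i) (by simp)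
  apply pow_lt_pow_left₀ _ hB hk
  rw [hsplit]
  linarith

private lemma class_ineq {Γ : Type*} [Fintype Γ] (p p' : Γ → ℝ) (hp0 : ∀ x, 0 ≤ p x)
    (hp'0 : ∀ x, 0 < p' x) (k : ℕ) (hk : k ≠ 0) {α : ℝ} (hα : 1 < α)
    (ghat gstar : Γ → ℝ) (hinj : Function.Injective gstar)
    (href : ∀ x y, ghat x < ghat y → gstar x < gstar y) (v : ℝ)
    (hv : ∃ x₀, ghat x₀ = v) :
    (∑ x ∈ Finset.univ.filter (fun i => ghat i = v),
        bestOfK p ghat k x ^ α * bestOfK p' ghat k x ^ (1 - α)) ≤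
      ∑ x ∈ Finset.univ.filter (fun i => ghat i = v),
        bestOfK p gstar k x ^ α * bestOfK p' gstar k x ^ (1 - α) := by
  obtain ⟨x₀, hx₀⟩ := hv
  have hx₀C : x₀ ∈ Finset.univ.filter (fun i => ghat i = v) := by simp [hx₀]
  have hn0 : ((Finset.univ.filter (fun i => ghat i = v)).card : ℝ) ≠ 0 :=
    Nat.cast_ne_zero.2 (Finset.card_ne_zero_of_mem hx₀C)
  have hn1 : (0:ℝ) ≤ 1 / ((Finset.univ.filter (fun i => ghat i = v)).card : ℝ) := by positivity
  -- decomposition of the global `≤` sums for elements of the class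
  have hdle : ∀ (q : Γ → ℝ), ∀ x ∈ Finset.univ.filter (fun i => ghat i = v),
      (∑ i ∈ Finset.univ.filter (fun i => gstar i ≤ gstar x), q i) =
        (∑ i ∈ Finset.univ.filter (fun i => ghat i < v), q i) +
          ∑ i ∈ (Finset.univ.filter (fun i => ghat i = v)).filter
            (fun i => gstar i ≤ gstar x), q i := by
    intro q x hx
    have hxv : ghat x = v := by simpa using hx
    have hs := sum_split q (fun i => gstar i ≤ gstar x) (fun i => ghat i < ghat x)
        (fun i => ghat i = ghat x ∧ gstar i ≤ gstar x)
        (fun i => by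
          constructor
          · intro hle
            rcases lt_trichotomy (ghat i) (ghat x) with h' | h' | h'
            · exact Or.inl h'
            · exact Or.inr ⟨h', hle⟩
            · exact absurd (href _ _ h') (not_lt.2 hle)
          · rintro (h' | ⟨-, h'⟩)
            · exact (href _ _ h').le
            · exact h')
        (fun i h1 h2 => absurd h2.1 (ne_of_lt h1))
    rw [hs, hxv]
    congr 1
    all_goals
      apply Finset.sum_congr _ fun _ _ => rfl
      ext i
      simp
  have hdlt : ∀ (q : Γ → ℝ), ∀ x ∈ Finset.univ.filter (fun i => ghat i = v),
      (∑ i ∈ Finset.univ.filter (fun i => gstar i < gstar x), q i) =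
        (∑ i ∈ Finset.univ.filter (fun i => ghat i < v), q i) +
          ∑ i ∈ (Finset.univ.filter (fun i => ghat i = v)).filter
            (fun i => gstar i < gstar x), q i := by
    intro q x hx
    have hxv : ghat x = v := by simpa using hx
    have hs := sum_split q (fun i => gstar i < gstar x) (fun i => ghat i < ghat x)
        (fun i => ghat i = ghat x ∧ gstar i < gstar x)
        (fun i => by
          constructor
          · intro hlt
            rcases lt_trichotomy (ghat i) (ghat x) with h' | h' | h'
            · exact Or.inl h'
            · exact Or.inr ⟨h', hlt⟩
            · exact absurd (href _ _ h') (not_lt.2 hlt.le)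
          · rintro (h' | ⟨-, h'⟩)
            · exact href _ _ h'
            · exact h')
        (fun i h1 h2 => absurd h2.1 (ne_of_lt h1))
    rw [hs, hxv]
    congr 1
    all_goals
      apply Finset.sum_congr _ fun _ _ => rfl
      ext i
      simp
  -- decomposition of the `≤ v` sum
  have hA : ∀ q : Γ → ℝ, (∑ i ∈ Finset.univ.filter (fun i => ghat i ≤ v), q i) =
      (∑ i ∈ Finset.univ.filter (fun i => ghat i < v), q i) +
        ∑ i ∈ Finset.univ.filter (fun i => ghat i = v), q i :=
    fun q => sum_split q (fun i => ghat i ≤ v) (fun i => ghat i < v) (fun i => ghat i = v)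
      (fun i => le_iff_lt_or_eq) (fun i h1 h2 => absurd h2 (ne_of_lt h1))
  -- the merged distribution is constant on the class
  have hmerged : ∀ (q : Γ → ℝ), ∀ x ∈ Finset.univ.filter (fun i => ghat i = v),
      bestOfK q ghat k x =
        (1 / ((Finset.univ.filter (fun i => ghat i = v)).card : ℝ)) *
          ((((∑ i ∈ Finset.univ.filter (fun i => ghat i < v), q i) +
              ∑ i ∈ Finset.univ.filter (fun i => ghat i = v), q i)) ^ k -
            (∑ i ∈ Finset.univ.filter (fun i => ghat i < v), q i) ^ k) := by
    intro q x hx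
    have hxv : ghat x = v := by simpa using hx
    simp only [bestOfK, hxv]
    rw [hA q]
  -- telescoping of the refined distribution over the class
  have htel : ∀ (q : Γ → ℝ),
      (∑ x ∈ Finset.univ.filter (fun i => ghat i = v), bestOfK q gstar k x) =
        (((∑ i ∈ Finset.univ.filter (fun i => ghat i < v), q i) +
            ∑ i ∈ Finset.univ.filter (fun i => ghat i = v), q i)) ^ k -
          (∑ i ∈ Finset.univ.filter (fun i => ghat i < v), q i) ^ k := by
    intro q
    have hstep : ∀ x ∈ Finset.univ.filter (fun i => ghat i = v),
        bestOfK q gstar k x =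
          (fun t => ((∑ i ∈ Finset.univ.filter (fun i => ghat i < v), q i) + t) ^ k)
              (∑ i ∈ (Finset.univ.filter (fun i => ghat i = v)).filter
                (fun i => gstar i ≤ gstar x), q i) -
            (fun t => ((∑ i ∈ Finset.univ.filter (fun i => ghat i < v), q i) + t) ^ k)
              (∑ i ∈ (Finset.univ.filter (fun i => ghat i = v)).filter
                (fun i => gstar i < gstar x), q i) := by
      intro x hx
      simp only
      rw [bestOfK_inj q hinj k x, hdle q x hx, hdlt q x hx]
    rw [Finset.sum_congr rfl hstep,
      telescope_sum (fun t => ((∑ i ∈ Finset.univ.filter (fun i => ghat i < v), q i) + t) ^ k)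
        q gstar (Finset.univ.filter (fun i => ghat i = v)) (hinj.injOn)]
    simp only [add_zero]
  -- nonnegativity facts
  have hB0 : ∀ (q : Γ → ℝ), (∀ x, 0 ≤ q x) →
      0 ≤ ∑ i ∈ Finset.univ.filter (fun i => ghat i < v), q i :=
    fun q hq => Finset.sum_nonneg fun i _ => hq i
  have hΔ0 : ∀ (q : Γ → ℝ), (∀ x, 0 ≤ q x) →
      0 ≤ (((∑ i ∈ Finset.univ.filter (fun i => ghat i < v), q i) +
          ∑ i ∈ Finset.univ.filter (fun i => ghat i = v), q i)) ^ k -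
        (∑ i ∈ Finset.univ.filter (fun i => ghat i < v), q i) ^ k := by
    intro q hq
    rw [sub_nonneg]
    exact pow_le_pow_left₀ (hB0 q hq)
      (le_add_of_nonneg_right (Finset.sum_nonneg fun i _ => hq i)) k
  have hpow : (1 / ((Finset.univ.filter (fun i => ghat i = v)).card : ℝ)) ^ α *
      (1 / ((Finset.univ.filter (fun i => ghat i = v)).card : ℝ)) ^ (1 - α) =
      1 / ((Finset.univ.filter (fun i => ghat i = v)).card : ℝ) := by
    rw [← Real.rpow_add (lt_of_le_of_ne hn1 (by
        simpa using (one_div_ne_zero hn0).symm)),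
      show α + (1 - α) = 1 by ring, Real.rpow_one]
  calc (∑ x ∈ Finset.univ.filter (fun i => ghat i = v),
        bestOfK p ghat k x ^ α * bestOfK p' ghat k x ^ (1 - α))
      = ∑ _x ∈ Finset.univ.filter (fun i => ghat i = v),
          ((1 / ((Finset.univ.filter (fun i => ghat i = v)).card : ℝ)) *
            ((((∑ i ∈ Finset.univ.filter (fun i => ghat i < v), p i) +
                ∑ i ∈ Finset.univ.filter (fun i => ghat i = v), p i)) ^ k -
              (∑ i ∈ Finset.univ.filter (fun i => ghat i < v), p i) ^ k)) ^ α *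
          ((1 / ((Finset.univ.filter (fun i => ghat i = v)).card : ℝ)) *
            ((((∑ i ∈ Finset.univ.filter (fun i => ghat i < v), p' i) +
                ∑ i ∈ Finset.univ.filter (fun i => ghat i = v), p' i)) ^ k -
              (∑ i ∈ Finset.univ.filter (fun i => ghat i < v), p' i) ^ k)) ^ (1 - α) :=
        Finset.sum_congr rfl fun x hx => by rw [hmerged p x hx, hmerged p' x hx]
    _ = (((∑ i ∈ Finset.univ.filter (fun i => ghat i < v), p i) +
            ∑ i ∈ Finset.univ.filter (fun i => ghat i = v), p i) ^ k -
          (∑ i ∈ Finset.univ.filter (fun i => ghat i < v), p i) ^ k) ^ α *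
        (((∑ i ∈ Finset.univ.filter (fun i => ghat i < v), p' i) +
            ∑ i ∈ Finset.univ.filter (fun i => ghat i = v), p' i) ^ k -
          (∑ i ∈ Finset.univ.filter (fun i => ghat i < v), p' i) ^ k) ^ (1 - α) := by
        rw [Finset.sum_const, nsmul_eq_mul,
          Real.mul_rpow hn1 (hΔ0 p hp0), Real.mul_rpow hn1 (hΔ0 p' fun y => (hp'0 y).le)]
        rw [show ∀ n A B C D : ℝ, n * ((A * B) * (C * D)) = (n * (A * C)) * (B * D) from
          fun _ _ _ _ _ => by ring, hpow, mul_one_div_cancel hn0, one_mul]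
    _ = (∑ x ∈ Finset.univ.filter (fun i => ghat i = v), bestOfK p gstar k x) ^ α *
        (∑ x ∈ Finset.univ.filter (fun i => ghat i = v), bestOfK p' gstar k x) ^ (1 - α) := by
        rw [htel p, htel p']
    _ ≤ _ :=
        holder_sub _ _ _ (fun x _ => bestOfK_nonneg p hp0 gstar k x)
          (fun x _ => bestOfK_pos p' (fun y => (hp'0 y).le) gstar k hk x (hp'0 x)) hα

/-- merging output symbols sharing the same score can only decrease the
Rényi divergence of best-of-`k` selection distributions: for pmfs `p`, `p'` (with `p'`
strictly positive) on a finite type, `k ≥ 1`, `α > 1`, any score function `ĝ` and any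
injective score function `g*` refining the weak order of `ĝ`,
`D_α(F_{k,ĝ}[p] ‖ F_{k,ĝ}[p']) ≤ D_α(F_{k,g*}[p] ‖ F_{k,g*}[p'])`. -/
theorem stmt_2 {Γ : Type*} [Fintype Γ] (p p' : Γ → ℝ) (hp0 : ∀ x, 0 ≤ p x)
    (hp1 : ∑ x, p x = 1) (hp'0 : ∀ x, 0 < p' x) (hp'1 : ∑ x, p' x = 1)
    (k : ℕ) (hk : 1 ≤ k) (α : ℝ) (hα : 1 < α)
    (ghat gstar : Γ → ℝ) (hinj : Function.Injective gstar)
    (href : ∀ x y, ghat x < ghat y → gstar x < gstar y) :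
    renyiDiv α (bestOfK p ghat k) (bestOfK p' ghat k) ≤
      renyiDiv α (bestOfK p gstar k) (bestOfK p' gstar k) := by
  have hk0 : k ≠ 0 := by omega
  -- some point has positive p-mass
  have hex : ∃ x, 0 < p x := by
    by_contra hcon
    push_neg at hcon
    have hz : ∀ x, p x = 0 := fun x => le_antisymm (hcon x) (hp0 x)
    simp [hz] at hp1
  obtain ⟨x₀, hx₀⟩ := hex
  -- positivity of the merged divergence sum
  have hM0 : ∀ x, 0 ≤ bestOfK p ghat k x := bestOfK_nonneg p hp0 ghat k
  have hN0 : ∀ x, 0 < bestOfK p' ghat k x :=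
    fun x => bestOfK_pos p' (fun y => (hp'0 y).le) ghat k hk0 x (hp'0 x)
  have hLpos : 0 < ∑ x, bestOfK p ghat k x ^ α * bestOfK p' ghat k x ^ (1 - α) := by
    apply Finset.sum_pos'
    · exact fun i _ => mul_nonneg (Real.rpow_nonneg (hM0 i) _)
        (Real.rpow_nonneg (hN0 i).le _)
    · exact ⟨x₀, Finset.mem_univ _,
        mul_pos (Real.rpow_pos_of_pos (bestOfK_pos p hp0 ghat k hk0 x₀ hx₀) _)
          (Real.rpow_pos_of_pos (hN0 x₀) _)⟩
  -- main inequality between the sums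
  have main : (∑ x, bestOfK p ghat k x ^ α * bestOfK p' ghat k x ^ (1 - α)) ≤
      ∑ x, bestOfK p gstar k x ^ α * bestOfK p' gstar k x ^ (1 - α) := by
    have hmaps : ∀ x ∈ (Finset.univ : Finset Γ), ghat x ∈ Finset.univ.image ghat :=
      fun x _ => Finset.mem_image_of_mem _ (Finset.mem_univ x)
    rw [← Finset.sum_fiberwise_of_maps_to hmaps
        (fun x => bestOfK p ghat k x ^ α * bestOfK p' ghat k x ^ (1 - α)),
      ← Finset.sum_fiberwise_of_maps_to hmaps
        (fun x => bestOfK p gstar k x ^ α * bestOfK p' gstar k x ^ (1 - α))]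
    apply Finset.sum_le_sum
    intro v hv
    obtain ⟨y, -, hy⟩ := Finset.mem_image.1 hv
    exact class_ineq p p' hp0 hp'0 k hk0 hα ghat gstar hinj href v ⟨y, hy⟩
  rw [renyiDiv, renyiDiv]
  apply mul_le_mul_of_nonneg_left (Real.log_le_log hLpos main)
  have : 0 < α - 1 := by linarith
  positivity
end

section
/- Let P be a probability measure on ℝ with density p with respect to Lebesgue measure and cumulative distribution function F(x) = P((−∞, x]), and let ξ be a probability mass function on the positive integers with finite mean Σ_{k≥1} k·ξ(k) < ∞. Define Q to be the mixture measure Q = Σ_{k≥1} ξ(k)·(the pushforward of the k-fold product measure P^{⊗k} on ℝ^k under the map (x_1, …, x_k) ↦ max_i x_i). Then Q is absolutely continuous with respect to Lebesgue measure with density x ↦ p(x)·ω_ξ(F(x)), i.e. Q equals the Lebesgue measure with density x ↦ p(x)·ω_ξ(F(x)). -/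
open MeasureTheory
open scoped ENNReal

/-- For a pmf `ξ` on the positive integers, `ω_ξ(x) = Σ_{k≥1} k·ξ(k)·x^{k−1}`. -/
noncomputable def omegaXi (ξ : ℕ+ → ℝ) (x : ℝ) : ℝ :=
  ∑' k : ℕ+, (k : ℝ) * ξ k * x ^ ((k : ℕ) - 1)

section Aux

open Set

variable (P : Measure ℝ) [IsProbabilityMeasure P]

lemma aux_tie_null (hato : ∀ x : ℝ, P {x} = 0) {n : ℕ} {i j : Fin (n + 1)} (hij : i ≠ j) :
    Measure.pi (fun _ : Fin (n + 1) => P) {ω | ω i = ω j} = 0 := by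
  obtain ⟨i', hi'⟩ := Fin.exists_succAbove_eq hij.symm
  have hS : MeasurableSet {ω : Fin (n + 1) → ℝ | ω i = ω j} :=
    measurableSet_eq_fun (measurable_pi_apply i) (measurable_pi_apply j)
  have hmp := (measurePreserving_piFinSuccAbove (fun _ : Fin (n + 1) => P) i).symm
  rw [← hmp.measure_preimage hS.nullMeasurableSet]
  have hpre : (MeasurableEquiv.piFinSuccAbove (fun _ : Fin (n + 1) => ℝ) i).symm ⁻¹'
      {ω | ω i = ω j} = {q : ℝ × (Fin n → ℝ) | q.1 = q.2 i'} := by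
    ext ⟨x, y⟩
    simp [MeasurableEquiv.piFinSuccAbove_symm_apply, Fin.insertNthEquiv, ← hi',
      Fin.insertNth_apply_same, Fin.insertNth_apply_succAbove]
  rw [hpre]
  have hpm : MeasurableSet {q : ℝ × (Fin n → ℝ) | q.1 = q.2 i'} :=
    measurableSet_eq_fun measurable_fst ((measurable_pi_apply i').comp measurable_snd)
  rw [Measure.prod_apply hpm]
  have hz : ∀ x : ℝ, (Measure.pi fun _ : Fin n => P) (Prod.mk x ⁻¹' {q : ℝ × (Fin n → ℝ) | q.1 = q.2 i'}) = 0 := by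
    intro x
    have hset : Prod.mk x ⁻¹' {q : ℝ × (Fin n → ℝ) | q.1 = q.2 i'}
        = Set.pi Set.univ (fun l => if l = i' then ({x} : Set ℝ) else univ) := by
      ext y
      simp only [mem_preimage, mem_setOf_eq, Set.mem_pi, Set.mem_univ, forall_true_left]
      constructor
      · intro h l
        by_cases hl : l = i' <;> simp [hl, ← h]
      · intro h
        have := h i'
        simp at this
        exact this.symm
    rw [hset, Measure.pi_pi]
    refine Finset.prod_eq_zero (Finset.mem_univ i') ?_
    simp [hato x]
  exact (lintegral_congr hz).trans lintegral_zero

lemma aux_A_measure (hato : ∀ x : ℝ, P {x} = 0) (n : ℕ) (t : ℝ) (j : Fin (n + 1)) :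
    Measure.pi (fun _ : Fin (n + 1) => P)
      {ω | ω j ≤ t ∧ ∀ i, i ≠ j → ω i < ω j}
      = ∫⁻ x in Iic t, (P (Iic x)) ^ n ∂P := by
  haveI : NoAtoms P := ⟨hato⟩
  have hIo : ∀ x : ℝ, P (Iio x) = P (Iic x) := fun x => measure_congr (Iio_ae_eq_Iic' (hato x))
  have hS2 : MeasurableSet {ω : Fin (n + 1) → ℝ | ∀ i, i ≠ j → ω i < ω j} := by
    have h : {ω : Fin (n + 1) → ℝ | ∀ i, i ≠ j → ω i < ω j}
        = ⋂ i, {ω | i ≠ j → ω i < ω j} := by ext ω; simp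
    rw [h]
    refine MeasurableSet.iInter fun i => ?_
    by_cases hij : i = j
    · simp [hij]
    · have h2 : {ω : Fin (n + 1) → ℝ | i ≠ j → ω i < ω j} = {ω | ω i < ω j} := by
        ext ω; simp [hij]
      rw [h2]
      exact measurableSet_lt (measurable_pi_apply i) (measurable_pi_apply j)
  have hS : MeasurableSet {ω : Fin (n + 1) → ℝ | ω j ≤ t ∧ ∀ i, i ≠ j → ω i < ω j} :=
    (measurableSet_le (measurable_pi_apply j) measurable_const).inter hS2
  have hmp := (measurePreserving_piFinSuccAbove (fun _ : Fin (n + 1) => P) j).symm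
  rw [← hmp.measure_preimage hS.nullMeasurableSet]
  have hpre : (MeasurableEquiv.piFinSuccAbove (fun _ : Fin (n + 1) => ℝ) j).symm ⁻¹'
      {ω | ω j ≤ t ∧ ∀ i, i ≠ j → ω i < ω j}
      = {q : ℝ × (Fin n → ℝ) | q.1 ≤ t ∧ ∀ i', q.2 i' < q.1} := by
    ext ⟨x, y⟩
    simp only [mem_preimage, MeasurableEquiv.piFinSuccAbove_symm_apply, Fin.insertNthEquiv,
      Equiv.coe_fn_mk, mem_setOf_eq, Fin.insertNth_apply_same]
    constructor
    · rintro ⟨h1, h2⟩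
      refine ⟨h1, fun i' => ?_⟩
      have := h2 (j.succAbove i') (Fin.succAbove_ne j i')
      simpa [Fin.insertNth_apply_succAbove] using this
    · rintro ⟨h1, h2⟩
      refine ⟨h1, fun i hi => ?_⟩
      obtain ⟨i', rfl⟩ := Fin.exists_succAbove_eq hi
      simpa [Fin.insertNth_apply_succAbove] using h2 i'
  rw [hpre]
  have hpm2 : MeasurableSet {q : ℝ × (Fin n → ℝ) | ∀ i', q.2 i' < q.1} := by
    have h : {q : ℝ × (Fin n → ℝ) | ∀ i', q.2 i' < q.1} = ⋂ i', {q | q.2 i' < q.1} := by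
      ext q; simp
    rw [h]
    exact MeasurableSet.iInter fun i' =>
      measurableSet_lt (measurable_snd.eval) measurable_fst
  have hpm : MeasurableSet {q : ℝ × (Fin n → ℝ) | q.1 ≤ t ∧ ∀ i', q.2 i' < q.1} :=
    (measurableSet_le measurable_fst measurable_const).inter hpm2
  rw [Measure.prod_apply hpm]
  have hz : ∀ x : ℝ,
      (Measure.pi fun _ : Fin n => P)
        (Prod.mk x ⁻¹' {q : ℝ × (Fin n → ℝ) | q.1 ≤ t ∧ ∀ i', q.2 i' < q.1})
      = Set.indicator (Iic t) (fun x => (P (Iic x)) ^ n) x := by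
    intro x
    by_cases hx : x ≤ t
    · rw [Set.indicator_of_mem (show x ∈ Iic t from hx)]
      have hset : Prod.mk x ⁻¹' {q : ℝ × (Fin n → ℝ) | q.1 ≤ t ∧ ∀ i', q.2 i' < q.1}
          = Set.pi Set.univ (fun _ : Fin n => Iio x) := by
        ext y; simp [hx]
      rw [hset, Measure.pi_pi]
      simp [hIo x]
    · rw [Set.indicator_of_notMem (show x ∉ Iic t from hx)]
      have hset : Prod.mk x ⁻¹' {q : ℝ × (Fin n → ℝ) | q.1 ≤ t ∧ ∀ i', q.2 i' < q.1}
          = (∅ : Set (Fin n → ℝ)) := by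
        ext y; simp [hx]
      rw [hset]
      simp
  rw [lintegral_congr hz, lintegral_indicator measurableSet_Iic]

lemma aux_cube_eq (hato : ∀ x : ℝ, P {x} = 0) (n : ℕ) (t : ℝ) :
    (P (Iic t)) ^ (n + 1)
      = (n + 1 : ℝ≥0∞) * ∫⁻ x in Iic t, (P (Iic x)) ^ n ∂P := by
  classical
  set π := Measure.pi (fun _ : Fin (n + 1) => P) with hπ
  set A : Fin (n + 1) → Set (Fin (n + 1) → ℝ) :=
    fun j => {ω | ω j ≤ t ∧ ∀ i, i ≠ j → ω i < ω j} with hA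
  have hAd : Pairwise (Function.onFun Disjoint A) := by
    intro j j' hjj'
    refine Set.disjoint_left.2 fun ω hω hω' => ?_
    have h1 := hω.2 j' hjj'.symm
    have h2 := hω'.2 j hjj'
    exact absurd (h1.trans h2) (lt_irrefl _)
  have hAm : ∀ j, MeasurableSet (A j) := by
    intro j
    have h2 : MeasurableSet {ω : Fin (n + 1) → ℝ | ∀ i, i ≠ j → ω i < ω j} := by
      have h : {ω : Fin (n + 1) → ℝ | ∀ i, i ≠ j → ω i < ω j}
          = ⋂ i, {ω | i ≠ j → ω i < ω j} := by ext ω; simp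
      rw [h]
      refine MeasurableSet.iInter fun i => ?_
      by_cases hij : i = j
      · simp [hij]
      · have h3 : {ω : Fin (n + 1) → ℝ | i ≠ j → ω i < ω j} = {ω | ω i < ω j} := by
          ext ω; simp [hij]
        rw [h3]
        exact measurableSet_lt (measurable_pi_apply i) (measurable_pi_apply j)
    exact (measurableSet_le (measurable_pi_apply j) measurable_const).inter h2
  set T : Set (Fin (n + 1) → ℝ) := ⋃ i, ⋃ j, {ω | i ≠ j ∧ ω i = ω j} with hT
  have hTnull : π T = 0 := by
    refine measure_iUnion_null fun i => measure_iUnion_null fun j => ?_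
    by_cases hij : i = j
    · have : {ω : Fin (n + 1) → ℝ | i ≠ j ∧ ω i = ω j} = ∅ := by ext ω; simp [hij]
      simp [this]
    · refine measure_mono_null (fun ω hω => hω.2) (aux_tie_null P hato hij)
  have hcube : π (Set.pi Set.univ fun _ : Fin (n + 1) => Iic t) = (P (Iic t)) ^ (n + 1) := by
    rw [hπ, Measure.pi_pi]
    simp [Finset.prod_const]
  have hsub : (Set.pi Set.univ fun _ : Fin (n + 1) => Iic t) ⊆ (⋃ j, A j) ∪ T := by
    intro ω hω
    by_cases hωT : ω ∈ T
    · exact Or.inr hωT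
    · left
      obtain ⟨j, hj⟩ := Finite.exists_max ω
      refine Set.mem_iUnion.2 ⟨j, hω j (Set.mem_univ j), fun i hi => ?_⟩
      refine lt_of_le_of_ne (hj i) fun h => ?_
      exact hωT (Set.mem_iUnion.2 ⟨i, Set.mem_iUnion.2 ⟨j, hi, h⟩⟩)
  have hsub' : (⋃ j, A j) ⊆ (Set.pi Set.univ fun _ : Fin (n + 1) => Iic t) := by
    intro ω hω
    obtain ⟨j, hj1, hj2⟩ := Set.mem_iUnion.1 hω
    intro i _
    by_cases hij : i = j
    · subst hij; exact hj1
    · exact le_of_lt (lt_of_lt_of_le (hj2 i hij) hj1)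
  have hU : π (⋃ j, A j) = (P (Iic t)) ^ (n + 1) := by
    refine le_antisymm (hcube ▸ measure_mono hsub') ?_
    calc (P (Iic t)) ^ (n + 1) = π (Set.pi Set.univ fun _ : Fin (n + 1) => Iic t) := hcube.symm
      _ ≤ π ((⋃ j, A j) ∪ T) := measure_mono hsub
      _ ≤ π (⋃ j, A j) + π T := measure_union_le _ _
      _ = π (⋃ j, A j) := by rw [hTnull, add_zero]
  have hAj : ∀ j, π (A j) = ∫⁻ x in Iic t, (P (Iic x)) ^ n ∂P :=
    fun j => aux_A_measure P hato n t j
  rw [← hU, measure_iUnion hAd hAm, tsum_fintype]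
  simp only [hAj]
  rw [Finset.sum_const, Finset.card_univ, Fintype.card_fin, nsmul_eq_mul]
  push_cast
  ring

lemma aux_map_max (hato : ∀ x : ℝ, P {x} = 0) (n : ℕ) :
    Measure.map (fun ω : Fin (n + 1) → ℝ => ⨆ i, ω i)
        (Measure.pi fun _ : Fin (n + 1) => P)
      = P.withDensity fun x => (n + 1 : ℝ≥0∞) * (P (Iic x)) ^ n := by
  have hΦm : Measurable fun x : ℝ => P (Iic x) :=
    Monotone.measurable fun a b hab => measure_mono (Iic_subset_Iic.2 hab)
  have hmax : Measurable fun ω : Fin (n + 1) → ℝ => ⨆ i, ω i :=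
    Measurable.iSup fun i => measurable_pi_apply i
  haveI : IsProbabilityMeasure (Measure.map (fun ω : Fin (n + 1) → ℝ => ⨆ i, ω i)
      (Measure.pi fun _ : Fin (n + 1) => P)) :=
    Measure.isProbabilityMeasure_map hmax.aemeasurable
  refine Measure.ext_of_Iic _ _ fun t => ?_
  rw [Measure.map_apply hmax measurableSet_Iic, withDensity_apply _ measurableSet_Iic]
  have hpre : (fun ω : Fin (n + 1) → ℝ => ⨆ i, ω i) ⁻¹' Iic t
      = Set.pi Set.univ fun _ : Fin (n + 1) => Iic t := by
    ext ω
    simp only [Set.mem_preimage, Set.mem_Iic, Set.mem_pi, Set.mem_univ, forall_true_left]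
    exact ciSup_le_iff (Set.Finite.bddAbove (Set.finite_range ω))
  rw [hpre, Measure.pi_pi]
  simp only [Finset.prod_const, Finset.card_univ, Fintype.card_fin]
  rw [aux_cube_eq P hato n t, lintegral_const_mul _ (hΦm.pow_const n)]

end Aux

/-- let `P` be a probability measure on `ℝ` with density `p` w.r.t. Lebesgue
measure and CDF `F`, and let `ξ` be a pmf on the positive integers with finite mean. If
`Q = Σ_{k≥1} ξ(k)·(pushforward of `P^{⊗k}` under the max map)`, then `Q` has density
`x ↦ p(x)·ω_ξ(F(x))` w.r.t. Lebesgue measure. -/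
theorem stmt_5 (p : ℝ → ℝ) (hp0 : ∀ x, 0 ≤ p x) (hpm : Measurable p)
    (P : Measure ℝ) [IsProbabilityMeasure P]
    (hP : P = volume.withDensity fun x => ENNReal.ofReal (p x))
    (F : ℝ → ℝ) (hF : ∀ x, F x = (P (Set.Iic x)).toReal)
    (ξ : ℕ+ → ℝ) (hξ0 : ∀ k, 0 ≤ ξ k) (hξ1 : ∑' k, ξ k = 1)
    (hmean : Summable fun k : ℕ+ => (k : ℝ) * ξ k)
    (Q : Measure ℝ)
    (hQ : Q = Measure.sum fun k : ℕ+ =>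
        ENNReal.ofReal (ξ k) • Measure.map (fun ω : Fin (k : ℕ) → ℝ => ⨆ i, ω i)
          (Measure.pi fun _ : Fin (k : ℕ) => P)) :
    Q = volume.withDensity fun x => ENNReal.ofReal (p x * omegaXi ξ (F x)) := by
  have hato : ∀ x : ℝ, P {x} = 0 := by
    intro x
    rw [hP, withDensity_apply _ (measurableSet_singleton x),
      Measure.restrict_eq_zero.mpr (Real.volume_singleton), lintegral_zero_measure]
  have hΦm : Measurable fun x : ℝ => P (Set.Iic x) :=
    Monotone.measurable fun a b hab => measure_mono (Set.Iic_subset_Iic.2 hab)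
  have hFm : Measurable F := by
    have : F = fun x => (P (Set.Iic x)).toReal := funext hF
    rw [this]
    exact ENNReal.measurable_toReal.comp hΦm
  have hF0 : ∀ x, 0 ≤ F x := fun x => by rw [hF x]; exact ENNReal.toReal_nonneg
  have hF1 : ∀ x, F x ≤ 1 := fun x => by
    rw [hF x]
    exact ENNReal.toReal_le_of_le_ofReal zero_le_one (by simpa using prob_le_one)
  have hofF : ∀ x, ENNReal.ofReal (F x) = P (Set.Iic x) := fun x => by
    rw [hF x]; exact ENNReal.ofReal_toReal (measure_ne_top P _)
  -- per-k identity
  have hk : ∀ m : ℕ, 0 < m →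
      Measure.map (fun ω : Fin m → ℝ => ⨆ i, ω i) (Measure.pi fun _ : Fin m => P)
        = volume.withDensity fun x => ENNReal.ofReal ((m : ℝ) * p x * F x ^ (m - 1)) := by
    intro m hm
    obtain ⟨n, rfl⟩ : ∃ n, m = n + 1 := ⟨m - 1, (Nat.succ_pred_eq_of_pos hm).symm⟩
    rw [aux_map_max P hato n]
    have hdm : Measurable fun x : ℝ => (n + 1 : ℝ≥0∞) * (P (Set.Iic x)) ^ n :=
      measurable_const.mul (hΦm.pow_const n)
    have hbase : (P.withDensity fun x => (n + 1 : ℝ≥0∞) * (P (Set.Iic x)) ^ n)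
        = ((volume.withDensity fun x => ENNReal.ofReal (p x)).withDensity
            fun x => (n + 1 : ℝ≥0∞) * (P (Set.Iic x)) ^ n) :=
      congrArg (fun μ : Measure ℝ => μ.withDensity fun x => (n + 1 : ℝ≥0∞) * (P (Set.Iic x)) ^ n) hP
    rw [hbase, ← withDensity_mul volume hpm.ennreal_ofReal hdm]
    congr 1
    funext x
    have h1 : (((n + 1 : ℕ) : ℝ)) * p x * F x ^ (n + 1 - 1)
        = (((n + 1 : ℕ) : ℝ)) * (p x * F x ^ n) := by push_cast; ring
    rw [Pi.mul_apply, h1, ENNReal.ofReal_mul (by positivity),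
      ENNReal.ofReal_mul (hp0 x), ENNReal.ofReal_natCast, ENNReal.ofReal_pow (hF0 x), hofF]
    push_cast
    ring
  have hgm : ∀ k : ℕ+, Measurable fun x =>
      ENNReal.ofReal (ξ k) * ENNReal.ofReal ((k : ℝ) * p x * F x ^ ((k : ℕ) - 1)) := by
    intro k
    exact measurable_const.mul
      (((measurable_const.mul hpm).mul (hFm.pow_const _)).ennreal_ofReal)
  have hstep : Q = Measure.sum fun k : ℕ+ => volume.withDensity fun x =>
      ENNReal.ofReal (ξ k) * ENNReal.ofReal ((k : ℝ) * p x * F x ^ ((k : ℕ) - 1)) := by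
    rw [hQ]
    congr 1
    funext k
    rw [hk (k : ℕ) k.2, ← withDensity_smul _ (f := fun x => ENNReal.ofReal ((k : ℝ) * p x * F x ^ ((k : ℕ) - 1)))
      (((measurable_const.mul hpm).mul (hFm.pow_const _)).ennreal_ofReal)]
    rfl
  rw [hstep, ← withDensity_tsum hgm]
  congr 1
  funext x
  rw [ENNReal.tsum_apply]
  have hterm : ∀ k : ℕ+, 0 ≤ ξ k * ((k : ℝ) * p x * F x ^ ((k : ℕ) - 1)) := fun k =>
    mul_nonneg (hξ0 k) (mul_nonneg (mul_nonneg (Nat.cast_nonneg _) (hp0 x))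
      (pow_nonneg (hF0 x) _))
  have hsum : Summable fun k : ℕ+ => ξ k * ((k : ℝ) * p x * F x ^ ((k : ℕ) - 1)) := by
    refine Summable.of_nonneg_of_le hterm (fun k => ?_)
      (hmean.mul_right (p x))
    have hpow : F x ^ ((k : ℕ) - 1) ≤ 1 := pow_le_one₀ (hF0 x) (hF1 x)
    calc ξ k * ((k : ℝ) * p x * F x ^ ((k : ℕ) - 1))
        = ((k : ℝ) * ξ k * p x) * F x ^ ((k : ℕ) - 1) := by ring
      _ ≤ ((k : ℝ) * ξ k * p x) * 1 := by
          refine mul_le_mul_of_nonneg_left hpow ?_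
          have := hξ0 k
          have := hp0 x
          positivity
      _ = (k : ℝ) * ξ k * p x := mul_one _
  have hre : p x * omegaXi ξ (F x)
      = ∑' k : ℕ+, ξ k * ((k : ℝ) * p x * F x ^ ((k : ℕ) - 1)) := by
    rw [omegaXi, ← tsum_mul_left]
    exact tsum_congr fun k => by ring
  rw [hre, ENNReal.ofReal_tsum_of_nonneg hterm hsum]
  refine tsum_congr fun k => ?_
  rw [ENNReal.ofReal_mul (hξ0 k)]
end

section
/- Let P and P' be probability measures on ℝ with cumulative distribution functions F and F', let f : [0,1] → [0,1], and assume the pair (P, P') satisfies the trade-off bound f. Then F'(o) ≥ f(1 − F(o)) for every o ∈ ℝ. Consequently, if ω : [0,1] → ℝ is nonnegative and nondecreasing with ω(f(a)) > 0 for all a ∈ [0,1], and M = sup_{a ∈ [0,1]} ω(1−a)/ω(f(a)) is finite, then ω(F(o)) ≤ M·ω(F'(o)) for every o ∈ ℝ. -/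
open MeasureTheory

/-- The pair `(P, P')` satisfies the trade-off bound `f` if every randomized test (a
measurable `φ` with values in `[0,1]`) has type II error `∫ (1−φ) dP'` at least `f`
evaluated at its type I error `∫ φ dP`. -/
def SatisfiesTradeoff {Ω : Type*} [MeasurableSpace Ω] (P P' : Measure Ω)
    (f : ℝ → ℝ) : Prop :=
  ∀ φ : Ω → ℝ, Measurable φ → (∀ ω, φ ω ∈ Set.Icc (0 : ℝ) 1) →
    f (∫ ω, φ ω ∂P) ≤ ∫ ω, (1 - φ ω) ∂P'

/-- if `(P, P')` satisfies the trade-off bound `f : [0,1] → [0,1]`, then the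
CDFs satisfy `F'(o) ≥ f(1 − F(o))` for every `o`; consequently, if `ω : [0,1] → ℝ` is
nonnegative and nondecreasing with `ω(f(a)) > 0` for all `a ∈ [0,1]`, and
`M = sup_{a∈[0,1]} ω(1−a)/ω(f(a))` is finite (a least upper bound exists), then
`ω(F(o)) ≤ M·ω(F'(o))` for every `o`. -/
theorem stmt_6 (P P' : Measure ℝ) [IsProbabilityMeasure P] [IsProbabilityMeasure P']
    (F F' : ℝ → ℝ) (hF : ∀ x, F x = (P (Set.Iic x)).toReal)
    (hF' : ∀ x, F' x = (P' (Set.Iic x)).toReal)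
    (f : ℝ → ℝ) (hfmaps : ∀ x ∈ Set.Icc (0 : ℝ) 1, f x ∈ Set.Icc (0 : ℝ) 1)
    (htrade : SatisfiesTradeoff P P' f)
    (ω : ℝ → ℝ) (hω0 : ∀ x ∈ Set.Icc (0 : ℝ) 1, 0 ≤ ω x)
    (hωmono : MonotoneOn ω (Set.Icc (0 : ℝ) 1))
    (hωf : ∀ a ∈ Set.Icc (0 : ℝ) 1, 0 < ω (f a))
    (M : ℝ)
    (hM : IsLUB ((fun a => ω (1 - a) / ω (f a)) '' Set.Icc (0 : ℝ) 1) M) :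
    (∀ o : ℝ, f (1 - F o) ≤ F' o) ∧ ∀ o : ℝ, ω (F o) ≤ M * ω (F' o) := by
  have hkey : ∀ o : ℝ, f (1 - F o) ≤ F' o := by
    intro o
    have hmeas : Measurable ((Set.Ioi o).indicator (1 : ℝ → ℝ)) :=
      measurable_one.indicator measurableSet_Ioi
    have hrange : ∀ x, (Set.Ioi o).indicator (1 : ℝ → ℝ) x ∈ Set.Icc (0:ℝ) 1 := by
      intro x
      by_cases h : x ∈ Set.Ioi o <;> simp [Set.indicator, h]
    have h1 : ∫ x, (Set.Ioi o).indicator (1 : ℝ → ℝ) x ∂P = 1 - F o := by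
      rw [MeasureTheory.integral_indicator_one measurableSet_Ioi, hF]
      have hc : Set.Ioi o = (Set.Iic o)ᶜ := Set.compl_Iic.symm
      rw [hc, measureReal_def, measure_compl measurableSet_Iic (measure_ne_top P _), measure_univ]
      rw [ENNReal.toReal_sub_of_le prob_le_one ENNReal.one_ne_top]
      simp
    have h2 : ∫ x, (1 - (Set.Ioi o).indicator (1 : ℝ → ℝ) x) ∂P' = F' o := by
      have heq : (fun x => 1 - (Set.Ioi o).indicator (1 : ℝ → ℝ) x)
          = (Set.Iic o).indicator (1 : ℝ → ℝ) := by
        funext x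
        by_cases h : x ≤ o <;> simp [Set.indicator, h, not_lt.mpr, lt_of_not_ge]
      rw [heq, MeasureTheory.integral_indicator_one measurableSet_Iic, hF', measureReal_def]
    have := htrade _ hmeas hrange
    rwa [h1, h2] at this
  refine ⟨hkey, fun o => ?_⟩
  have hFo : F o ∈ Set.Icc (0:ℝ) 1 := by
    rw [hF]
    exact ⟨ENNReal.toReal_nonneg, by
      simpa using ENNReal.toReal_mono ENNReal.one_ne_top prob_le_one⟩
  have hF'o : F' o ∈ Set.Icc (0:ℝ) 1 := by
    rw [hF']
    exact ⟨ENNReal.toReal_nonneg, by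
      simpa using ENNReal.toReal_mono ENNReal.one_ne_top prob_le_one⟩
  set a := 1 - F o with ha
  have haI : a ∈ Set.Icc (0:ℝ) 1 := ⟨by linarith [hFo.2], by linarith [hFo.1]⟩
  have hratio : ω (1 - a) / ω (f a) ≤ M := hM.1 ⟨a, haI, rfl⟩
  have hfa : f a ∈ Set.Icc (0:ℝ) 1 := hfmaps a haI
  have hωfa : 0 < ω (f a) := hωf a haI
  have h1a : (1 : ℝ) - a = F o := by ring
  have step1 : ω (F o) ≤ M * ω (f a) := by
    rw [← h1a]
    calc ω (1 - a) = ω (1 - a) / ω (f a) * ω (f a) := by field_simp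
    _ ≤ M * ω (f a) := by
        apply mul_le_mul_of_nonneg_right hratio hωfa.le
  have hM0 : 0 ≤ M := le_trans (div_nonneg (hω0 _ (by rw [h1a]; exact hFo)) hωfa.le) hratio
  have step2 : ω (f a) ≤ ω (F' o) := hωmono hfa hF'o (hkey o)
  calc ω (F o) ≤ M * ω (f a) := step1
  _ ≤ M * ω (F' o) := mul_le_mul_of_nonneg_left step2 hM0
end

section
/- Let P and P' be probability measures on ℝ with densities p and p' with respect to Lebesgue measure and cumulative distribution functions F and F'. Let ω : [0,1] → ℝ be nonnegative and nondecreasing with ω(1) > 0, and let M ≥ 1 be a constant such that ω(F(o)) ≤ M·ω(F'(o)) for every o ∈ ℝ. Define q(o) = p(o)·ω(F(o)) and q'(o) = p'(o)·ω(F'(o)), and let Q be the measure on ℝ with density q with respect to Lebesgue measure. Define the privacy loss functions ℓ(o) = log(p(o)/p'(o)) and ℓ_Q(o) = log(q(o)/q'(o)), with the convention that the value is +∞ when the denominator vanishes and the numerator is positive. If ε ≥ 0 and δ ≥ 0 satisfy ∫_ε^∞ e^{ε−z}·P({o : ℓ(o) > z}) dz ≤ δ, then, with ε_H = ε + log M,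 ∫_{ε_H}^∞ e^{ε_H−z}·Q({o : ℓ_Q(o) > z}) dz ≤ ω(1)·δ. -/
open MeasureTheory
open scoped ENNReal

/-- let `P`, `P'` be probability measures on `ℝ` with Lebesgue densities
`p`, `p'` and CDFs `F`, `F'`. Let `ω : [0,1] → ℝ` be nonnegative and nondecreasing with
`ω(1) > 0`, and `M ≥ 1` with `ω(F(o)) ≤ M·ω(F'(o))` for all `o`. Let
`q = p·(ω∘F)`, `q' = p'·(ω∘F')`, and `Q` the measure with Lebesgue density `q`. If
`∫_ε^∞ e^{ε−z}·P({o : ℓ(o) > z}) dz ≤ δ` (with the privacy loss `ℓ = log(p/p')`, and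
`{o : ℓ(o) > z}` encoded as `{o : p(o) > e^z·p'(o)}`, which matches the `+∞` convention
when the denominator vanishes and the numerator is positive), then with
`ε_H = ε + log M`, `∫_{ε_H}^∞ e^{ε_H−z}·Q({o : ℓ_Q(o) > z}) dz ≤ ω(1)·δ`. -/
theorem stmt_7 (p p' : ℝ → ℝ) (hp0 : ∀ x, 0 ≤ p x) (hp'0 : ∀ x, 0 ≤ p' x)
    (hpm : Measurable p) (hp'm : Measurable p')
    (P P' : Measure ℝ) [IsProbabilityMeasure P] [IsProbabilityMeasure P']
    (hP : P = volume.withDensity fun x => ENNReal.ofReal (p x))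
    (hP' : P' = volume.withDensity fun x => ENNReal.ofReal (p' x))
    (F F' : ℝ → ℝ) (hF : ∀ x, F x = (P (Set.Iic x)).toReal)
    (hF' : ∀ x, F' x = (P' (Set.Iic x)).toReal)
    (ω : ℝ → ℝ) (hω0 : ∀ x ∈ Set.Icc (0 : ℝ) 1, 0 ≤ ω x)
    (hωmono : MonotoneOn ω (Set.Icc (0 : ℝ) 1)) (hω1 : 0 < ω 1)
    (M : ℝ) (hM : 1 ≤ M) (hdom : ∀ o : ℝ, ω (F o) ≤ M * ω (F' o))
    (q q' : ℝ → ℝ) (hq : ∀ o, q o = p o * ω (F o)) (hq' : ∀ o, q' o = p' o * ω (F' o))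
    (Q : Measure ℝ) (hQ : Q = volume.withDensity fun o => ENNReal.ofReal (q o))
    (ε δ : ℝ) (hε : 0 ≤ ε) (hδ : 0 ≤ δ)
    (hcond : ∫⁻ z in Set.Ioi ε, ENNReal.ofReal (Real.exp (ε - z)) *
        P {o | Real.exp z * p' o < p o} ≤ ENNReal.ofReal δ) :
    ∫⁻ z in Set.Ioi (ε + Real.log M),
        ENNReal.ofReal (Real.exp (ε + Real.log M - z)) *
          Q {o | Real.exp z * q' o < q o} ≤ ENNReal.ofReal (ω 1 * δ) := by
  set c := Real.log M with hc
  have hM0 : (0 : ℝ) < M := lt_of_lt_of_le one_pos hM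
  have h1mem : (1 : ℝ) ∈ Set.Icc (0 : ℝ) 1 := Set.right_mem_Icc.mpr zero_le_one
  -- F and F' take values in [0,1]
  have hF01 : ∀ o, F o ∈ Set.Icc (0 : ℝ) 1 := by
    intro o
    rw [hF]
    refine ⟨ENNReal.toReal_nonneg, ?_⟩
    refine ENNReal.toReal_le_of_le_ofReal zero_le_one ?_
    simpa using prob_le_one (μ := P) (s := Set.Iic o)
  have hF'01 : ∀ o, F' o ∈ Set.Icc (0 : ℝ) 1 := by
    intro o
    rw [hF']
    refine ⟨ENNReal.toReal_nonneg, ?_⟩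
    refine ENNReal.toReal_le_of_le_ofReal zero_le_one ?_
    simpa using prob_le_one (μ := P') (s := Set.Iic o)
  -- Q is dominated by ω(1) • P
  have hQle : ∀ s : Set ℝ, Q s ≤ ENNReal.ofReal (ω 1) * P s := by
    intro s
    have hmono : (fun o => ENNReal.ofReal (q o)) ≤ᵐ[volume]
        fun o => ENNReal.ofReal (ω 1) * ENNReal.ofReal (p o) := by
      filter_upwards with x
      rw [hq x, ← ENNReal.ofReal_mul (hω0 1 h1mem)]
      refine ENNReal.ofReal_le_ofReal ?_
      have hωle : ω (F x) ≤ ω 1 := hωmono (hF01 x) h1mem (hF01 x).2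
      nlinarith [hp0 x]
    have hsm : volume.withDensity (fun o => ENNReal.ofReal (ω 1) * ENNReal.ofReal (p o)) =
        (ENNReal.ofReal (ω 1)) • (volume.withDensity fun x => ENNReal.ofReal (p x)) :=
      withDensity_smul _ hpm.ennreal_ofReal
    calc Q s ≤ (volume.withDensity
          fun o => ENNReal.ofReal (ω 1) * ENNReal.ofReal (p o)) s := by
          rw [hQ]; exact Measure.le_iff'.mp (withDensity_mono hmono) s
      _ = ENNReal.ofReal (ω 1) * P s := by
          rw [hsm, ← hP, Measure.smul_apply, smul_eq_mul]
  -- set inclusion: the Q-level set is contained in a shifted P-level set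
  have hsub : ∀ z : ℝ, {o | Real.exp z * q' o < q o} ⊆
      {o | Real.exp (z - c) * p' o < p o} := by
    intro z o ho
    simp only [Set.mem_setOf_eq] at ho ⊢
    rw [hq, hq'] at ho
    have hω'0 : 0 ≤ ω (F' o) := hω0 _ (hF'01 o)
    have hωF0 : 0 ≤ ω (F o) := hω0 _ (hF01 o)
    rcases eq_or_lt_of_le hω'0 with h0 | hpos
    · exfalso
      have hd := hdom o
      rw [← h0, mul_zero] at hd
      have hωF : ω (F o) = 0 := le_antisymm hd hωF0
      rw [← h0, hωF] at ho
      simp at ho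
    · have hd : p o * ω (F o) ≤ p o * (M * ω (F' o)) :=
        mul_le_mul_of_nonneg_left (hdom o) (hp0 o)
      have hlt : Real.exp z * p' o * ω (F' o) < M * p o * ω (F' o) := by nlinarith
      have hlt2 : Real.exp z * p' o < M * p o := by
        have := (mul_lt_mul_iff_of_pos_right hpos).mp hlt
        linarith
      have hez : Real.exp (z - c) * M = Real.exp z := by
        rw [hc, Real.exp_sub, Real.exp_log hM0]
        field_simp
      by_contra hcon
      push_neg at hcon
      have h3 : p o * M ≤ Real.exp (z - c) * p' o * M :=
        mul_le_mul_of_nonneg_right hcon hM0.le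
      have h4 : Real.exp (z - c) * p' o * M = Real.exp z * p' o := by
        rw [← hez]; ring
      rw [h4] at h3
      linarith [mul_comm (p o) M]
  -- main calculation
  calc ∫⁻ z in Set.Ioi (ε + c),
        ENNReal.ofReal (Real.exp (ε + c - z)) * Q {o | Real.exp z * q' o < q o}
      ≤ ∫⁻ z in Set.Ioi (ε + c), ENNReal.ofReal (ω 1) *
          (ENNReal.ofReal (Real.exp (ε + c - z)) *
            P {o | Real.exp (z - c) * p' o < p o}) := by
        refine lintegral_mono fun z => ?_
        calc ENNReal.ofReal (Real.exp (ε + c - z)) * Q {o | Real.exp z * q' o < q o}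
            ≤ ENNReal.ofReal (Real.exp (ε + c - z)) *
              (ENNReal.ofReal (ω 1) * P {o | Real.exp z * q' o < q o}) :=
              mul_le_mul_right (hQle _) _
          _ ≤ ENNReal.ofReal (Real.exp (ε + c - z)) *
              (ENNReal.ofReal (ω 1) * P {o | Real.exp (z - c) * p' o < p o}) :=
              mul_le_mul_right (mul_le_mul_right (measure_mono (hsub z)) _) _
          _ = ENNReal.ofReal (ω 1) * (ENNReal.ofReal (Real.exp (ε + c - z)) *
              P {o | Real.exp (z - c) * p' o < p o}) := by ring
    _ = ENNReal.ofReal (ω 1) * ∫⁻ z in Set.Ioi (ε + c),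
          ENNReal.ofReal (Real.exp (ε + c - z)) *
            P {o | Real.exp (z - c) * p' o < p o} :=
        lintegral_const_mul' _ _ ENNReal.ofReal_ne_top
    _ = ENNReal.ofReal (ω 1) * ∫⁻ w in Set.Ioi ε,
          ENNReal.ofReal (Real.exp (ε - w)) * P {o | Real.exp w * p' o < p o} := by
        congr 1
        have hkey := (measurePreserving_add_right volume c).setLIntegral_comp_preimage_emb
          (measurableEmbedding_addRight c)
          (fun z => ENNReal.ofReal (Real.exp (ε + c - z)) *
            P {o | Real.exp (z - c) * p' o < p o}) (Set.Ioi (ε + c))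
        rw [← hkey]
        have hpre : (fun x => x + c) ⁻¹' Set.Ioi (ε + c) = Set.Ioi ε := by
          ext x; simp
        rw [hpre]
        refine lintegral_congr fun w => ?_
        show ENNReal.ofReal (Real.exp (ε + c - (w + c))) *
            P {o | Real.exp (w + c - c) * p' o < p o}
          = ENNReal.ofReal (Real.exp (ε - w)) * P {o | Real.exp w * p' o < p o}
        have h1 : ε + c - (w + c) = ε - w := by ring
        have h2 : w + c - c = w := by ring
        rw [h1, h2]
    _ ≤ ENNReal.ofReal (ω 1) * ENNReal.ofReal δ := mul_le_mul_right hcond _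
    _ = ENNReal.ofReal (ω 1 * δ) := (ENNReal.ofReal_mul hω1.le).symm
end

section
/- Let f : [0,1] → [0,1] be nonincreasing, and let P and P' be probability measures on ℝ with densities p and p' with respect to Lebesgue measure and cumulative distribution functions F and F'. Assume that both (P, P') and (P', P) satisfy the trade-off bound f. Let ξ be a probability mass function on the positive integers with ξ(1) > 0 and finite mean Σ_{k≥1} k·ξ(k) < ∞, and define the measures Q and Q' on ℝ with Lebesgue densities x ↦ p(x)·ω_ξ(F(x)) and x ↦ p'(x)·ω_ξ(F'(x)) respectively. Fix δ_H > 0, set δ = δ_H / ω_ξ(1), and let ε ≥ 0 satisfy f(x) ≥ 1 − δ − e^ε·x for all x ∈ [0,1]. Set ε_H = ε + sup_{a ∈ [0,1]} log(ω_ξ(1−a)/ω_ξ(f(a))). Then Q and Q' are (ε_H, δ_H)-indistinguishable in both orders, i.e. Q(S) ≤ e^{ε_H}·Q'(S) + δ_H and Q'(S) ≤ e^{ε_H}·Q(S) + δ_H for every measurable set S ⊆ ℝ. -/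
open MeasureTheory
open scoped ENNReal

/-- Measures `μ` and `ν` are `(ε,δ)`-indistinguishable if `μ(S) ≤ e^ε·ν(S) + δ` for
every measurable set `S`. -/
def Indist {Ω : Type*} [MeasurableSpace Ω] (ε δ : ℝ) (μ ν : Measure Ω) : Prop :=
  ∀ S : Set Ω, MeasurableSet S →
    μ S ≤ ENNReal.ofReal (Real.exp ε) * ν S + ENNReal.ofReal δ

section Aux

variable {ξ : ℕ+ → ℝ}

lemma omega_summable (hξ0 : ∀ k, 0 ≤ ξ k) (hmean : Summable fun k : ℕ+ => (k : ℝ) * ξ k)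
    {x : ℝ} (h0 : 0 ≤ x) (h1 : x ≤ 1) :
    Summable fun k : ℕ+ => (k : ℝ) * ξ k * x ^ ((k : ℕ) - 1) := by
  refine hmean.of_nonneg_of_le (fun k => ?_) (fun k => ?_)
  · have hk : (0:ℝ) ≤ (k : ℝ) := by positivity
    exact mul_nonneg (mul_nonneg hk (hξ0 k)) (pow_nonneg h0 _)
  have hpow : x ^ ((k : ℕ) - 1) ≤ 1 := pow_le_one₀ h0 h1
  have hk : (0:ℝ) ≤ (k : ℝ) * ξ k := mul_nonneg (by positivity) (hξ0 k)
  calc (k : ℝ) * ξ k * x ^ ((k : ℕ) - 1) ≤ (k : ℝ) * ξ k * 1 :=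
        mul_le_mul_of_nonneg_left hpow hk
    _ = (k : ℝ) * ξ k := mul_one _

lemma omega_nonneg (hξ0 : ∀ k, 0 ≤ ξ k) {x : ℝ} (h0 : 0 ≤ x) : 0 ≤ omegaXi ξ x :=
  tsum_nonneg fun k =>
    mul_nonneg (mul_nonneg (by positivity) (hξ0 k)) (pow_nonneg h0 _)

lemma omega_mono (hξ0 : ∀ k, 0 ≤ ξ k) (hmean : Summable fun k : ℕ+ => (k : ℝ) * ξ k)
    {x y : ℝ} (h0 : 0 ≤ x) (hxy : x ≤ y) (h1 : y ≤ 1) :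
    omegaXi ξ x ≤ omegaXi ξ y := by
  refine Summable.tsum_le_tsum (fun k => ?_) (omega_summable hξ0 hmean h0 (hxy.trans h1))
    (omega_summable hξ0 hmean (h0.trans hxy) h1)
  have hk : (0:ℝ) ≤ (k : ℝ) * ξ k := mul_nonneg (by positivity) (hξ0 k)
  exact mul_le_mul_of_nonneg_left (pow_le_pow_left₀ h0 hxy _) hk

lemma omega_ge (hξ0 : ∀ k, 0 ≤ ξ k) (hmean : Summable fun k : ℕ+ => (k : ℝ) * ξ k)
    {x : ℝ} (h0 : 0 ≤ x) (h1 : x ≤ 1) : ξ 1 ≤ omegaXi ξ x := by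
  have := Summable.le_tsum (omega_summable hξ0 hmean h0 h1) 1 (fun j _ =>
    mul_nonneg (mul_nonneg (by positivity) (hξ0 j)) (pow_nonneg h0 _))
  simpa [omegaXi] using this

lemma tradeoff_set {μ ν : Measure ℝ} [IsProbabilityMeasure μ] [IsProbabilityMeasure ν]
    {f : ℝ → ℝ} (h : SatisfiesTradeoff μ ν f) {T : Set ℝ} (hT : MeasurableSet T) :
    f ((μ T).toReal) ≤ 1 - (ν T).toReal := by
  have hφm : Measurable (T.indicator fun _ => (1:ℝ)) := measurable_const.indicator hT
  have hφv : ∀ ω, T.indicator (fun _ => (1:ℝ)) ω ∈ Set.Icc (0:ℝ) 1 := by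
    intro ω; by_cases hω : ω ∈ T <;> simp [hω]
  have key := h _ hφm hφv
  have h1 : ∫ ω, T.indicator (fun _ => (1:ℝ)) ω ∂μ = (μ T).toReal := by
    exact integral_indicator_one (μ := μ) hT
  have h2 : ∫ ω, (1 - T.indicator (fun _ => (1:ℝ)) ω) ∂ν = (ν Tᶜ).toReal := by
    have heq : ∀ ω, 1 - T.indicator (fun _ => (1:ℝ)) ω = Tᶜ.indicator (fun _ => (1:ℝ)) ω := by
      intro ω; by_cases hω : ω ∈ T <;> simp [hω]
    simp_rw [heq]
    exact integral_indicator_one (μ := ν) hT.compl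
  have h3 : (ν Tᶜ).toReal = 1 - (ν T).toReal := by
    rw [measure_compl hT (measure_ne_top _ _), measure_univ,
      ENNReal.toReal_sub_of_le prob_le_one ENNReal.one_ne_top, ENNReal.toReal_one]
  rw [h1, h2, h3] at key
  exact key

/-- One direction of the hyper-parameter tuning indistinguishability bound. -/
lemma one_side (ξ : ℕ+ → ℝ) (hξ0 : ∀ k, 0 ≤ ξ k)
    (hmean : Summable fun k : ℕ+ => (k : ℝ) * ξ k)
    (p p' : ℝ → ℝ) (hp'0 : ∀ x, 0 ≤ p' x)
    (hpm : Measurable p) (hp'm : Measurable p')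
    (P P' : Measure ℝ) [IsProbabilityMeasure P] [IsProbabilityMeasure P']
    (hP : P = volume.withDensity fun x => ENNReal.ofReal (p x))
    (hP' : P' = volume.withDensity fun x => ENNReal.ofReal (p' x))
    (F F' : ℝ → ℝ) (hF : ∀ x, F x = (P (Set.Iic x)).toReal)
    (hF' : ∀ x, F' x = (P' (Set.Iic x)).toReal)
    (c ε δ δH : ℝ) (hδ0 : 0 ≤ δ)
    (hpoint : ∀ x, omegaXi ξ (F x) ≤ Real.exp c * omegaXi ξ (F' x))
    (hPT : ∀ T : Set ℝ, MeasurableSet T → (P T).toReal ≤ δ + Real.exp ε * (P' T).toReal)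
    (hδHle : omegaXi ξ 1 * δ ≤ δH)
    (Q Q' : Measure ℝ)
    (hQ : Q = volume.withDensity fun x => ENNReal.ofReal (p x * omegaXi ξ (F x)))
    (hQ' : Q' = volume.withDensity fun x => ENNReal.ofReal (p' x * omegaXi ξ (F' x))) :
    Indist (ε + c) δH Q Q' := by
  have hM0 : 0 ≤ omegaXi ξ 1 := omega_nonneg hξ0 zero_le_one
  have hFx : ∀ x, F x ∈ Set.Icc (0:ℝ) 1 := by
    intro x
    rw [hF]
    exact ⟨ENNReal.toReal_nonneg, by
      simpa using ENNReal.toReal_mono ENNReal.one_ne_top (prob_le_one (μ := P))⟩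
  have hF'x : ∀ x, F' x ∈ Set.Icc (0:ℝ) 1 := by
    intro x
    rw [hF']
    exact ⟨ENNReal.toReal_nonneg, by
      simpa using ENNReal.toReal_mono ENNReal.one_ne_top (prob_le_one (μ := P'))⟩
  have hF'mono : Monotone F' := by
    intro a b hab
    rw [hF', hF']
    exact ENNReal.toReal_mono (measure_ne_top _ _) (measure_mono (Set.Iic_subset_Iic.2 hab))
  have homF'meas : Measurable fun x => omegaXi ξ (F' x) := by
    have : Monotone fun x => omegaXi ξ (F' x) := by
      intro a b hab
      exact omega_mono hξ0 hmean (hF'x a).1 (hF'mono hab) (hF'x b).2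
    exact this.measurable
  intro S hS
  set r : ℝ → ℝ := fun x => max (p x - Real.exp ε * p' x) 0 with hrdef
  have hrm : Measurable r := (hpm.sub (hp'm.const_mul _)).max measurable_const
  have hr0 : ∀ x, 0 ≤ r x := fun x => le_max_right _ _
  -- pointwise bound
  have hpt : ∀ x, ENNReal.ofReal (p x * omegaXi ξ (F x)) ≤
      ENNReal.ofReal (Real.exp (ε + c)) * ENNReal.ofReal (p' x * omegaXi ξ (F' x))
      + ENNReal.ofReal (omegaXi ξ 1) * ENNReal.ofReal (r x) := by
    intro x
    have hωF0 : 0 ≤ omegaXi ξ (F x) := omega_nonneg hξ0 (hFx x).1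
    have hωF'0 : 0 ≤ omegaXi ξ (F' x) := omega_nonneg hξ0 (hF'x x).1
    have hωFM : omegaXi ξ (F x) ≤ omegaXi ξ 1 :=
      omega_mono hξ0 hmean (hFx x).1 (hFx x).2 le_rfl
    have h1 : p x * omegaXi ξ (F x)
        ≤ Real.exp (ε + c) * (p' x * omegaXi ξ (F' x)) + omegaXi ξ 1 * r x := by
      have hple : p x ≤ Real.exp ε * p' x + r x := by
        have := le_max_left (p x - Real.exp ε * p' x) 0
        simp only [hrdef]; linarith
      calc p x * omegaXi ξ (F x) ≤ (Real.exp ε * p' x + r x) * omegaXi ξ (F x) :=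
            mul_le_mul_of_nonneg_right hple hωF0
        _ = Real.exp ε * (p' x * omegaXi ξ (F x)) + r x * omegaXi ξ (F x) := by ring
        _ ≤ Real.exp ε * (p' x * (Real.exp c * omegaXi ξ (F' x))) + r x * omegaXi ξ 1 :=
            add_le_add
              (mul_le_mul_of_nonneg_left
                (mul_le_mul_of_nonneg_left (hpoint x) (hp'0 x)) (Real.exp_nonneg ε))
              (mul_le_mul_of_nonneg_left hωFM (hr0 x))
        _ = Real.exp (ε + c) * (p' x * omegaXi ξ (F' x)) + omegaXi ξ 1 * r x := by
            rw [Real.exp_add]; ring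
    calc ENNReal.ofReal (p x * omegaXi ξ (F x))
        ≤ ENNReal.ofReal (Real.exp (ε + c) * (p' x * omegaXi ξ (F' x)) + omegaXi ξ 1 * r x) :=
          ENNReal.ofReal_le_ofReal h1
      _ = _ := by
          rw [ENNReal.ofReal_add
              (mul_nonneg (Real.exp_nonneg _) (mul_nonneg (hp'0 x) hωF'0))
              (mul_nonneg hM0 (hr0 x)),
            ENNReal.ofReal_mul (Real.exp_nonneg _), ENNReal.ofReal_mul hM0]
  have hq'm : Measurable fun x => ENNReal.ofReal (p' x * omegaXi ξ (F' x)) :=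
    (hp'm.mul homF'meas).ennreal_ofReal
  have hrm' : Measurable fun x => ENNReal.ofReal (r x) := hrm.ennreal_ofReal
  -- the δ bound
  have hrint : ∫⁻ x, ENNReal.ofReal (r x) ≤ ENNReal.ofReal δ := by
    set T : Set ℝ := {x | Real.exp ε * p' x < p x} with hTdef
    have hT : MeasurableSet T := measurableSet_lt (hp'm.const_mul _) hpm
    have hind : (fun x => ENNReal.ofReal (r x))
        = T.indicator fun x => ENNReal.ofReal (p x - Real.exp ε * p' x) := by
      funext x
      by_cases hx : x ∈ T
      · rw [Set.indicator_of_mem hx]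
        have hx' : Real.exp ε * p' x < p x := hx
        congr 1
        simp only [hrdef]
        exact max_eq_left (by linarith)
      · rw [Set.indicator_of_notMem hx]
        have hx' : ¬ Real.exp ε * p' x < p x := hx
        have : r x = 0 := by simp only [hrdef]; exact max_eq_right (by linarith [not_lt.1 hx'])
        rw [this, ENNReal.ofReal_zero]
    rw [hind, lintegral_indicator hT]
    have hA : ∫⁻ x in T,
        (ENNReal.ofReal (p x - Real.exp ε * p' x) + ENNReal.ofReal (Real.exp ε * p' x)) = P T := by
      rw [hP, withDensity_apply _ hT]
      refine setLIntegral_congr_fun hT (fun x hx => ?_)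
      have hx' : Real.exp ε * p' x < p x := hx
      rw [← ENNReal.ofReal_add (by linarith) (mul_nonneg (Real.exp_nonneg _) (hp'0 x)),
        sub_add_cancel]
    rw [lintegral_add_left (f := fun x => ENNReal.ofReal (p x - Real.exp ε * p' x)) ((hpm.sub (hp'm.const_mul _)).ennreal_ofReal)] at hA
    have hB : ∫⁻ x in T, ENNReal.ofReal (Real.exp ε * p' x) =
        ENNReal.ofReal (Real.exp ε) * P' T := by
      simp_rw [ENNReal.ofReal_mul (Real.exp_nonneg ε)]
      rw [lintegral_const_mul _ hp'm.ennreal_ofReal, hP', withDensity_apply _ hT]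
    rw [hB] at hA
    have hBne : ENNReal.ofReal (Real.exp ε) * P' T ≠ ⊤ :=
      ENNReal.mul_ne_top ENNReal.ofReal_ne_top (measure_ne_top _ _)
    have hPle : P T ≤ ENNReal.ofReal δ + ENNReal.ofReal (Real.exp ε) * P' T := by
      calc P T = ENNReal.ofReal (P T).toReal := (ENNReal.ofReal_toReal (measure_ne_top _ _)).symm
        _ ≤ ENNReal.ofReal (δ + Real.exp ε * (P' T).toReal) :=
            ENNReal.ofReal_le_ofReal (hPT T hT)
        _ = ENNReal.ofReal δ + ENNReal.ofReal (Real.exp ε) * ENNReal.ofReal (P' T).toReal := by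
            rw [ENNReal.ofReal_add hδ0 (by positivity), ENNReal.ofReal_mul (Real.exp_nonneg _)]
        _ = _ := by rw [ENNReal.ofReal_toReal (measure_ne_top _ _)]
    exact (ENNReal.add_le_add_iff_right hBne).1 (by rw [hA]; exact hPle)
  -- assemble
  have hQS : Q S = ∫⁻ x in S, ENNReal.ofReal (p x * omegaXi ξ (F x)) := by
    rw [hQ, withDensity_apply _ hS]
  have hQ'S : Q' S = ∫⁻ x in S, ENNReal.ofReal (p' x * omegaXi ξ (F' x)) := by
    rw [hQ', withDensity_apply _ hS]
  calc Q S = ∫⁻ x in S, ENNReal.ofReal (p x * omegaXi ξ (F x)) := hQS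
    _ ≤ ∫⁻ x in S, (ENNReal.ofReal (Real.exp (ε + c)) * ENNReal.ofReal (p' x * omegaXi ξ (F' x))
          + ENNReal.ofReal (omegaXi ξ 1) * ENNReal.ofReal (r x)) :=
        lintegral_mono fun x => hpt x
    _ = ENNReal.ofReal (Real.exp (ε + c)) * (∫⁻ x in S, ENNReal.ofReal (p' x * omegaXi ξ (F' x)))
          + ENNReal.ofReal (omegaXi ξ 1) * (∫⁻ x in S, ENNReal.ofReal (r x)) := by
        rw [lintegral_add_left (hq'm.const_mul _), lintegral_const_mul _ hq'm,
          lintegral_const_mul _ hrm']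
    _ ≤ ENNReal.ofReal (Real.exp (ε + c)) * Q' S
          + ENNReal.ofReal (omegaXi ξ 1) * ENNReal.ofReal δ := by
        rw [hQ'S]
        exact add_le_add le_rfl (mul_le_mul_right
          ((setLIntegral_le_lintegral _ _).trans hrint) _)
    _ ≤ ENNReal.ofReal (Real.exp (ε + c)) * Q' S + ENNReal.ofReal δH := by
        refine add_le_add le_rfl ?_
        rw [← ENNReal.ofReal_mul hM0]
        exact ENNReal.ofReal_le_ofReal hδHle

end Aux

/-- let `f : [0,1] → [0,1]` be nonincreasing and let `P`, `P'` be probability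
measures on `ℝ` with Lebesgue densities `p`, `p'` and CDFs `F`, `F'`, such that both
`(P,P')` and `(P',P)` satisfy the trade-off bound `f`. Let `ξ` be a pmf on the positive
integers with `ξ(1) > 0` and finite mean, and let `Q`, `Q'` have Lebesgue densities
`p·ω_ξ(F)`, `p'·ω_ξ(F')`. Fix `δ_H > 0`, set `δ = δ_H/ω_ξ(1)`, let `ε ≥ 0` satisfy
`f(x) ≥ 1 − δ − e^ε·x` on `[0,1]`, and set
`ε_H = ε + sup_{a∈[0,1]} log(ω_ξ(1−a)/ω_ξ(f(a)))`. Then `Q` and `Q'` are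
`(ε_H, δ_H)`-indistinguishable in both orders. -/
theorem stmt_8 (f : ℝ → ℝ) (hfanti : AntitoneOn f (Set.Icc (0 : ℝ) 1))
    (hfmaps : ∀ x ∈ Set.Icc (0 : ℝ) 1, f x ∈ Set.Icc (0 : ℝ) 1)
    (p p' : ℝ → ℝ) (hp0 : ∀ x, 0 ≤ p x) (hp'0 : ∀ x, 0 ≤ p' x)
    (hpm : Measurable p) (hp'm : Measurable p')
    (P P' : Measure ℝ) [IsProbabilityMeasure P] [IsProbabilityMeasure P']
    (hP : P = volume.withDensity fun x => ENNReal.ofReal (p x))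
    (hP' : P' = volume.withDensity fun x => ENNReal.ofReal (p' x))
    (F F' : ℝ → ℝ) (hF : ∀ x, F x = (P (Set.Iic x)).toReal)
    (hF' : ∀ x, F' x = (P' (Set.Iic x)).toReal)
    (htrade : SatisfiesTradeoff P P' f) (htrade' : SatisfiesTradeoff P' P f)
    (ξ : ℕ+ → ℝ) (hξ0 : ∀ k, 0 ≤ ξ k) (hξ1 : ∑' k, ξ k = 1) (hξone : 0 < ξ 1)
    (hmean : Summable fun k : ℕ+ => (k : ℝ) * ξ k)
    (Q Q' : Measure ℝ)
    (hQ : Q = volume.withDensity fun x => ENNReal.ofReal (p x * omegaXi ξ (F x)))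
    (hQ' : Q' = volume.withDensity fun x => ENNReal.ofReal (p' x * omegaXi ξ (F' x)))
    (δH : ℝ) (hδH : 0 < δH) (δ : ℝ) (hδ : δ = δH / omegaXi ξ 1)
    (ε : ℝ) (hε : 0 ≤ ε)
    (hεf : ∀ x ∈ Set.Icc (0 : ℝ) 1, 1 - δ - Real.exp ε * x ≤ f x)
    (εH : ℝ)
    (hεH : εH = ε + sSup ((fun a => Real.log (omegaXi ξ (1 - a) / omegaXi ξ (f a))) ''
        Set.Icc (0 : ℝ) 1)) :
    Indist εH δH Q Q' ∧ Indist εH δH Q' Q := by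
  have hM1 : ξ 1 ≤ omegaXi ξ 1 := omega_ge hξ0 hmean zero_le_one le_rfl
  have hMpos : 0 < omegaXi ξ 1 := lt_of_lt_of_le hξone hM1
  have hδpos : 0 < δ := hδ ▸ div_pos hδH hMpos
  have hδHle : omegaXi ξ 1 * δ ≤ δH := by
    rw [hδ, mul_div_cancel₀ _ (ne_of_gt hMpos)]
  set c := sSup ((fun a => Real.log (omegaXi ξ (1 - a) / omegaXi ξ (f a))) ''
      Set.Icc (0 : ℝ) 1) with hcdef
  -- key sup inequality
  have hkey : ∀ a ∈ Set.Icc (0:ℝ) 1, omegaXi ξ (1 - a) ≤ Real.exp c * omegaXi ξ (f a) := by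
    intro a ha
    have hfa := hfmaps a ha
    have hnum : ξ 1 ≤ omegaXi ξ (1 - a) :=
      omega_ge hξ0 hmean (by linarith [ha.2]) (by linarith [ha.1])
    have hden : ξ 1 ≤ omegaXi ξ (f a) := omega_ge hξ0 hmean hfa.1 hfa.2
    have hdenpos : 0 < omegaXi ξ (f a) := lt_of_lt_of_le hξone hden
    have hratio : 0 < omegaXi ξ (1 - a) / omegaXi ξ (f a) :=
      div_pos (lt_of_lt_of_le hξone hnum) hdenpos
    have hbdd : BddAbove ((fun a => Real.log (omegaXi ξ (1 - a) / omegaXi ξ (f a))) ''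
        Set.Icc (0 : ℝ) 1) := by
      refine ⟨Real.log (omegaXi ξ 1 / ξ 1), ?_⟩
      rintro b ⟨a', ha', rfl⟩
      have hfa' := hfmaps a' ha'
      have hnum1 : omegaXi ξ (1 - a') ≤ omegaXi ξ 1 :=
        omega_mono hξ0 hmean (by linarith [ha'.2]) (by linarith [ha'.1]) le_rfl
      have hnum0 : ξ 1 ≤ omegaXi ξ (1 - a') :=
        omega_ge hξ0 hmean (by linarith [ha'.2]) (by linarith [ha'.1])
      have hden' : ξ 1 ≤ omegaXi ξ (f a') := omega_ge hξ0 hmean hfa'.1 hfa'.2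
      refine Real.log_le_log (div_pos (lt_of_lt_of_le hξone hnum0)
        (lt_of_lt_of_le hξone hden')) ?_
      exact div_le_div₀ (le_trans hξone.le hM1) hnum1 hξone hden'
    have hlog : Real.log (omegaXi ξ (1 - a) / omegaXi ξ (f a)) ≤ c :=
      le_csSup hbdd ⟨a, ha, rfl⟩
    have hle : omegaXi ξ (1 - a) / omegaXi ξ (f a) ≤ Real.exp c := by
      rw [← Real.exp_log hratio]
      exact Real.exp_le_exp.2 hlog
    exact (div_le_iff₀ hdenpos).1 hle
  -- CDF facts
  have hFx : ∀ x, F x ∈ Set.Icc (0:ℝ) 1 := by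
    intro x; rw [hF]
    exact ⟨ENNReal.toReal_nonneg, by
      simpa using ENNReal.toReal_mono ENNReal.one_ne_top (prob_le_one (μ := P))⟩
  have hF'x : ∀ x, F' x ∈ Set.Icc (0:ℝ) 1 := by
    intro x; rw [hF']
    exact ⟨ENNReal.toReal_nonneg, by
      simpa using ENNReal.toReal_mono ENNReal.one_ne_top (prob_le_one (μ := P'))⟩
  have hcompl : ∀ (μ : Measure ℝ) [IsProbabilityMeasure μ] (T : Set ℝ), MeasurableSet T →
      (μ Tᶜ).toReal = 1 - (μ T).toReal := by
    intro μ _ T hT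
    rw [measure_compl hT (measure_ne_top _ _), measure_univ,
      ENNReal.toReal_sub_of_le prob_le_one ENNReal.one_ne_top, ENNReal.toReal_one]
  -- trade-off consequences
  have hPT : ∀ T : Set ℝ, MeasurableSet T → (P T).toReal ≤ δ + Real.exp ε * (P' T).toReal := by
    intro T hT
    have h1 := tradeoff_set htrade' hT
    have ht : (P' T).toReal ∈ Set.Icc (0:ℝ) 1 :=
      ⟨ENNReal.toReal_nonneg, by
        simpa using ENNReal.toReal_mono ENNReal.one_ne_top (prob_le_one (μ := P'))⟩
    have h2 := hεf _ ht
    linarith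
  have hP'T : ∀ T : Set ℝ, MeasurableSet T → (P' T).toReal ≤ δ + Real.exp ε * (P T).toReal := by
    intro T hT
    have h1 := tradeoff_set htrade hT
    have ht : (P T).toReal ∈ Set.Icc (0:ℝ) 1 :=
      ⟨ENNReal.toReal_nonneg, by
        simpa using ENNReal.toReal_mono ENNReal.one_ne_top (prob_le_one (μ := P))⟩
    have h2 := hεf _ ht
    linarith
  have hpoint : ∀ x, omegaXi ξ (F x) ≤ Real.exp c * omegaXi ξ (F' x) := by
    intro x
    have hFm := hFx x
    have hF'm := hF'x x
    have ha : (1 - F x) ∈ Set.Icc (0:ℝ) 1 := ⟨by linarith [hFm.2], by linarith [hFm.1]⟩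
    have h1 : f (1 - F x) ≤ F' x := by
      have h := tradeoff_set htrade (measurableSet_Iic (a := x)).compl
      rw [hcompl P _ measurableSet_Iic, hcompl P' _ measurableSet_Iic, ← hF x, ← hF' x] at h
      linarith
    have h2 : omegaXi ξ (f (1 - F x)) ≤ omegaXi ξ (F' x) :=
      omega_mono hξ0 hmean (hfmaps _ ha).1 h1 hF'm.2
    have h3 : omegaXi ξ (F x) ≤ Real.exp c * omegaXi ξ (f (1 - F x)) := by
      have := hkey (1 - F x) ha
      simpa [sub_sub_cancel] using this
    calc omegaXi ξ (F x) ≤ Real.exp c * omegaXi ξ (f (1 - F x)) := h3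
      _ ≤ Real.exp c * omegaXi ξ (F' x) :=
          mul_le_mul_of_nonneg_left h2 (Real.exp_nonneg _)
  have hpoint' : ∀ x, omegaXi ξ (F' x) ≤ Real.exp c * omegaXi ξ (F x) := by
    intro x
    have hFm := hFx x
    have hF'm := hF'x x
    have ha : (1 - F' x) ∈ Set.Icc (0:ℝ) 1 := ⟨by linarith [hF'm.2], by linarith [hF'm.1]⟩
    have h1 : f (1 - F' x) ≤ F x := by
      have h := tradeoff_set htrade' (measurableSet_Iic (a := x)).compl
      rw [hcompl P' _ measurableSet_Iic, hcompl P _ measurableSet_Iic, ← hF x, ← hF' x] at h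
      linarith
    have h2 : omegaXi ξ (f (1 - F' x)) ≤ omegaXi ξ (F x) :=
      omega_mono hξ0 hmean (hfmaps _ ha).1 h1 hFm.2
    have h3 : omegaXi ξ (F' x) ≤ Real.exp c * omegaXi ξ (f (1 - F' x)) := by
      have := hkey (1 - F' x) ha
      simpa [sub_sub_cancel] using this
    calc omegaXi ξ (F' x) ≤ Real.exp c * omegaXi ξ (f (1 - F' x)) := h3
      _ ≤ Real.exp c * omegaXi ξ (F x) :=
          mul_le_mul_of_nonneg_left h2 (Real.exp_nonneg _)
  rw [hεH]
  constructor
  · exact one_side ξ hξ0 hmean p p' hp'0 hpm hp'm P P' hP hP' F F' hF hF'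
      c ε δ δH hδpos.le hpoint hPT hδHle Q Q' hQ hQ'
  · exact one_side ξ hξ0 hmean p' p hp0 hp'm hpm P' P hP' hP F' F hF' hF
      c ε δ δH hδpos.le hpoint' hP'T hδHle Q' Q hQ' hQ
end

section
/- Let ε > 0, δ ∈ [0,1], and let P and P' be probability measures on a measurable space. Then P and P' are (ε,δ)-indistinguishable in both orders (i.e. P(S) ≤ e^ε·P'(S) + δ and P'(S) ≤ e^ε·P(S) + δ for every measurable set S) if and only if for every randomized test φ, writing FP = ∫ φ dP and FN = ∫ (1−φ) dP', both FP + e^ε·FN ≥ 1 − δ and FN + e^ε·FP ≥ 1 − δ hold. -/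
open MeasureTheory

/-- Layer-cake truncation: for `g ≤ 1`, the layer-cake integral over `Ioi 0` equals
that over `Ioc 0 1`. -/
lemma layercake_trunc {Ω : Type*} [MeasurableSpace Ω] (μ : Measure Ω) (g : Ω → ℝ)
    (hg1 : ∀ ω, g ω ≤ 1) :
    ∫⁻ t in Set.Ioi (0:ℝ), μ {a | t < g a} = ∫⁻ t in Set.Ioc (0:ℝ) 1, μ {a | t < g a} := by
  rw [← Set.Ioc_union_Ioi_eq_Ioi (zero_le_one : (0:ℝ) ≤ 1),
    lintegral_union measurableSet_Ioi Set.Ioc_disjoint_Ioi_same]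
  have h0 : ∫⁻ t in Set.Ioi (1:ℝ), μ {a | t < g a} = ∫⁻ _ in Set.Ioi (1:ℝ), (0:ENNReal) := by
    apply setLIntegral_congr_fun measurableSet_Ioi
    intro t ht; dsimp only
    have : {a | t < g a} = (∅ : Set Ω) := by
      ext a
      simp only [Set.mem_setOf_eq, Set.mem_empty_iff_false, iff_false, not_lt]
      exact (hg1 a).trans ht.le
    rw [this, measure_empty]
  rw [h0, lintegral_zero, add_zero]

/-- Key lemma: indistinguishability implies the integral inequality for `[0,1]`-valued
functions (lintegral version). -/
lemma key_lintegral {Ω : Type*} [MeasurableSpace Ω] (ε δ : ℝ)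
    (μ ν : Measure Ω) [IsProbabilityMeasure μ] [IsProbabilityMeasure ν]
    (h : Indist ε δ μ ν) (g : Ω → ℝ) (hg : Measurable g)
    (hg01 : ∀ ω, g ω ∈ Set.Icc (0:ℝ) 1) :
    ∫⁻ ω, ENNReal.ofReal (g ω) ∂μ ≤
      ENNReal.ofReal (Real.exp ε) * ∫⁻ ω, ENNReal.ofReal (g ω) ∂ν + ENNReal.ofReal δ := by
  have hg0 : ∀ ω, 0 ≤ g ω := fun ω => (hg01 ω).1
  have hg1 : ∀ ω, g ω ≤ 1 := fun ω => (hg01 ω).2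
  rw [lintegral_eq_lintegral_meas_lt μ (Filter.Eventually.of_forall hg0) hg.aemeasurable,
    lintegral_eq_lintegral_meas_lt ν (Filter.Eventually.of_forall hg0) hg.aemeasurable,
    layercake_trunc μ g hg1, layercake_trunc ν g hg1]
  calc ∫⁻ t in Set.Ioc (0:ℝ) 1, μ {a | t < g a}
      ≤ ∫⁻ t in Set.Ioc (0:ℝ) 1,
          (ENNReal.ofReal (Real.exp ε) * ν {a | t < g a} + ENNReal.ofReal δ) := by
        apply lintegral_mono
        intro t
        exact h _ (measurableSet_lt measurable_const hg)
    _ = ENNReal.ofReal (Real.exp ε) * (∫⁻ t in Set.Ioc (0:ℝ) 1, ν {a | t < g a})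
          + ENNReal.ofReal δ := by
        rw [lintegral_add_right' _ aemeasurable_const,
          lintegral_const_mul' _ _ ENNReal.ofReal_ne_top, setLIntegral_const,
          Real.volume_Ioc]
        norm_num

/-- Real-integral version of the key lemma. -/
lemma key_integral {Ω : Type*} [MeasurableSpace Ω] (ε δ : ℝ) (hδ : 0 ≤ δ)
    (μ ν : Measure Ω) [IsProbabilityMeasure μ] [IsProbabilityMeasure ν]
    (h : Indist ε δ μ ν) (g : Ω → ℝ) (hg : Measurable g)
    (hg01 : ∀ ω, g ω ∈ Set.Icc (0:ℝ) 1) :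
    ∫ ω, g ω ∂μ ≤ Real.exp ε * ∫ ω, g ω ∂ν + δ := by
  have hg0 : ∀ ω, 0 ≤ g ω := fun ω => (hg01 ω).1
  have bdd : ∀ (ρ : Measure Ω) [IsProbabilityMeasure ρ],
      ∫⁻ ω, ENNReal.ofReal (g ω) ∂ρ ≤ 1 := by
    intro ρ _
    calc ∫⁻ ω, ENNReal.ofReal (g ω) ∂ρ ≤ ∫⁻ _, 1 ∂ρ := by
          apply lintegral_mono
          intro ω
          exact ENNReal.ofReal_le_one.mpr (hg01 ω).2
      _ = 1 := by simp
  have hμfin : ∫⁻ ω, ENNReal.ofReal (g ω) ∂μ ≠ ⊤ := (lt_of_le_of_lt (bdd μ) ENNReal.one_lt_top).ne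
  have hνfin : ∫⁻ ω, ENNReal.ofReal (g ω) ∂ν ≠ ⊤ := (lt_of_le_of_lt (bdd ν) ENNReal.one_lt_top).ne
  have key := key_lintegral ε δ μ ν h g hg hg01
  have h1 : ∫ ω, g ω ∂μ = (∫⁻ ω, ENNReal.ofReal (g ω) ∂μ).toReal :=
    integral_eq_lintegral_of_nonneg_ae (Filter.Eventually.of_forall hg0)
      hg.aestronglyMeasurable
  have h2 : ∫ ω, g ω ∂ν = (∫⁻ ω, ENNReal.ofReal (g ω) ∂ν).toReal :=
    integral_eq_lintegral_of_nonneg_ae (Filter.Eventually.of_forall hg0)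
      hg.aestronglyMeasurable
  rw [h1, h2]
  have := ENNReal.toReal_mono (by
      refine ENNReal.add_ne_top.mpr ⟨ENNReal.mul_ne_top ENNReal.ofReal_ne_top hνfin,
        ENNReal.ofReal_ne_top⟩) key
  rwa [ENNReal.toReal_add (ENNReal.mul_ne_top ENNReal.ofReal_ne_top hνfin)
      ENNReal.ofReal_ne_top, ENNReal.toReal_mul, ENNReal.toReal_ofReal (Real.exp_pos ε).le,
      ENNReal.toReal_ofReal hδ] at this

/-- DP as hypothesis testing: for `ε > 0`, `δ ∈ [0,1]`, and probability
measures `P`, `P'`, the pair is `(ε,δ)`-indistinguishable in both orders iff for every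
randomized test `φ`, with `FP = ∫ φ dP` and `FN = ∫ (1−φ) dP'`, both
`FP + e^ε·FN ≥ 1 − δ` and `FN + e^ε·FP ≥ 1 − δ` hold. -/
theorem stmt_10 {Ω : Type*} [MeasurableSpace Ω] (ε δ : ℝ) (hε : 0 < ε)
    (hδ : δ ∈ Set.Icc (0 : ℝ) 1)
    (P P' : Measure Ω) [IsProbabilityMeasure P] [IsProbabilityMeasure P'] :
    (Indist ε δ P P' ∧ Indist ε δ P' P) ↔
      ∀ φ : Ω → ℝ, Measurable φ → (∀ ω, φ ω ∈ Set.Icc (0 : ℝ) 1) →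
        1 - δ ≤ (∫ ω, φ ω ∂P) + Real.exp ε * ∫ ω, (1 - φ ω) ∂P' ∧
        1 - δ ≤ (∫ ω, (1 - φ ω) ∂P') + Real.exp ε * ∫ ω, φ ω ∂P := by
  obtain ⟨hδ0, hδ1⟩ := hδ
  have integ : ∀ (ρ : Measure Ω) [IsProbabilityMeasure ρ] (φ : Ω → ℝ), Measurable φ →
      (∀ ω, φ ω ∈ Set.Icc (0:ℝ) 1) → Integrable φ ρ := by
    intro ρ _ φ hφ hφ01
    refine Integrable.mono' (integrable_const 1) hφ.aestronglyMeasurable ?_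
    filter_upwards with ω
    rw [Real.norm_eq_abs, abs_of_nonneg (hφ01 ω).1]
    exact (hφ01 ω).2
  have compl_int : ∀ (ρ : Measure Ω) [IsProbabilityMeasure ρ] (φ : Ω → ℝ), Measurable φ →
      (∀ ω, φ ω ∈ Set.Icc (0:ℝ) 1) → ∫ ω, (1 - φ ω) ∂ρ = 1 - ∫ ω, φ ω ∂ρ := by
    intro ρ _ φ hφ hφ01
    rw [integral_sub (integrable_const 1) (integ ρ φ hφ hφ01)]
    simp
  constructor
  · rintro ⟨h1, h2⟩ φ hφ hφ01
    have hcomp : ∀ ω, (fun ω => 1 - φ ω) ω ∈ Set.Icc (0:ℝ) 1 := by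
      intro ω
      simp only [Set.mem_Icc]
      constructor
      · linarith [(hφ01 ω).2]
      · linarith [(hφ01 ω).1]
    have hcompm : Measurable fun ω => 1 - φ ω := measurable_const.sub hφ
    constructor
    · -- from Indist P P' applied to g = 1 - φ
      have := key_integral ε δ hδ0 P P' h1 _ hcompm hcomp
      beta_reduce at this
      rw [compl_int P φ hφ hφ01] at this
      linarith
    · -- from Indist P' P applied to g = φ
      have := key_integral ε δ hδ0 P' P h2 φ hφ hφ01
      have hc := compl_int P' φ hφ hφ01
      linarith
  · intro h
    have toENN : ∀ (μ ν : Measure Ω) [IsProbabilityMeasure μ] [IsProbabilityMeasure ν]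
        (S : Set Ω), (μ S).toReal ≤ Real.exp ε * (ν S).toReal + δ →
        μ S ≤ ENNReal.ofReal (Real.exp ε) * ν S + ENNReal.ofReal δ := by
      intro μ ν _ _ S hreal
      calc μ S = ENNReal.ofReal (μ S).toReal := (ENNReal.ofReal_toReal (measure_ne_top μ S)).symm
        _ ≤ ENNReal.ofReal (Real.exp ε * (ν S).toReal + δ) := ENNReal.ofReal_le_ofReal hreal
        _ ≤ ENNReal.ofReal (Real.exp ε) * ν S + ENNReal.ofReal δ := by
            rw [ENNReal.ofReal_add (by positivity) hδ0,
              ENNReal.ofReal_mul (Real.exp_pos ε).le,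
              ENNReal.ofReal_toReal (measure_ne_top ν S)]
    constructor
    · intro S hS
      set φ : Ω → ℝ := Sᶜ.indicator (fun _ => (1:ℝ)) with hφdef
      have hφm : Measurable φ := measurable_const.indicator hS.compl
      have hφ01 : ∀ ω, φ ω ∈ Set.Icc (0:ℝ) 1 := by
        intro ω; by_cases hω : ω ∈ S <;> simp [hφdef, Set.indicator_apply, hω]
      have hφP : ∫ ω, φ ω ∂P = 1 - (P S).toReal := by
        rw [hφdef, integral_indicator_const _ hS.compl]
        simp [measureReal_def, prob_compl_eq_one_sub hS, ENNReal.toReal_sub_of_le prob_le_one ENNReal.one_ne_top]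
      have hφP' : ∫ ω, (1 - φ ω) ∂P' = (P' S).toReal := by
        have heq : (fun ω => 1 - φ ω) = S.indicator (fun _ => (1:ℝ)) := by
          ext ω; by_cases hω : ω ∈ S <;> simp [hφdef, Set.indicator_apply, hω]
        rw [heq, integral_indicator_const _ hS]
        simp [measureReal_def]
      have := (h φ hφm hφ01).1
      rw [hφP, hφP'] at this
      exact toENN P P' S (by linarith)
    · intro S hS
      set φ : Ω → ℝ := S.indicator (fun _ => (1:ℝ)) with hφdef
      have hφm : Measurable φ := measurable_const.indicator hS
      have hφ01 : ∀ ω, φ ω ∈ Set.Icc (0:ℝ) 1 := by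
        intro ω; by_cases hω : ω ∈ S <;> simp [hφdef, Set.indicator_apply, hω]
      have hφP : ∫ ω, φ ω ∂P = (P S).toReal := by
        rw [hφdef, integral_indicator_const _ hS]
        simp [measureReal_def]
      have hφP' : ∫ ω, (1 - φ ω) ∂P' = 1 - (P' S).toReal := by
        have heq : (fun ω => 1 - φ ω) = Sᶜ.indicator (fun _ => (1:ℝ)) := by
          ext ω; by_cases hω : ω ∈ S <;> simp [hφdef, Set.indicator_apply, hω]
        rw [heq, integral_indicator_const _ hS.compl]
        simp [measureReal_def, prob_compl_eq_one_sub hS, ENNReal.toReal_sub_of_le prob_le_one ENNReal.one_ne_top]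
      have := (h φ hφm hφ01).2
      rw [hφP, hφP'] at this
      exact toENN P' P S (by linarith)
end

section
/- Let ε ≥ 0, δ ∈ [0,1], and let P and P' be probability measures on a measurable space. Define f_{ε,δ} : [0,1] → [0,1] by f_{ε,δ}(x) = max(0, 1 − δ − e^ε·x, e^{−ε}·(1 − δ − x)). Then P and P' are (ε,δ)-indistinguishable in both orders (i.e. P(S) ≤ e^ε·P'(S) + δ and P'(S) ≤ e^ε·P(S) + δ for every measurable set S) if and only if both (P, P') and (P', P) satisfy the trade-off bound f_{ε,δ}. -/
open MeasureTheory

/-- Functional form of indistinguishability: for any `[0,1]`-valued measurable `φ`,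
`∫ φ dμ ≤ e^ε ∫ φ dν + δ`. -/
lemma indist_integral {Ω : Type*} [MeasurableSpace Ω] {ε δ : ℝ} (hδ : 0 ≤ δ)
    {μ ν : Measure Ω} [IsProbabilityMeasure μ] [IsProbabilityMeasure ν]
    (h : Indist ε δ μ ν) {φ : Ω → ℝ} (hφ : Measurable φ)
    (hφ01 : ∀ ω, φ ω ∈ Set.Icc (0 : ℝ) 1) :
    ∫ ω, φ ω ∂μ ≤ Real.exp ε * ∫ ω, φ ω ∂ν + δ := by
  have hnnμ : ∀ᵐ ω ∂μ, 0 ≤ φ ω := ae_of_all _ fun ω => (hφ01 ω).1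
  have hnnν : ∀ᵐ ω ∂ν, 0 ≤ φ ω := ae_of_all _ fun ω => (hφ01 ω).1
  have hlayμ := lintegral_eq_lintegral_meas_lt μ hnnμ hφ.aemeasurable
  have hlayν := lintegral_eq_lintegral_meas_lt ν hnnν hφ.aemeasurable
  -- the tail beyond 1 is zero
  have htailμ : ∫⁻ t in Set.Ioi (1 : ℝ), μ {a | t < φ a} = 0 := by
    have : ∀ t ∈ Set.Ioi (1 : ℝ), μ {a | t < φ a} = (0 : ENNReal) := by
      intro t ht
      have : {a | t < φ a} = (∅ : Set Ω) := by
        ext a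
        simp only [Set.mem_setOf_eq, Set.mem_empty_iff_false, iff_false, not_lt]
        exact (hφ01 a).2.trans (le_of_lt ht)
      simp [this]
    rw [setLIntegral_congr_fun measurableSet_Ioi this]
    simp
  have hsplitμ : ∫⁻ t in Set.Ioi (0 : ℝ), μ {a | t < φ a}
      = ∫⁻ t in Set.Ioc (0 : ℝ) 1, μ {a | t < φ a} := by
    rw [← Set.Ioc_union_Ioi_eq_Ioi (zero_le_one (α := ℝ)),
      lintegral_union measurableSet_Ioi (Set.Ioc_disjoint_Ioi le_rfl), htailμ, add_zero]
  -- measurability of layer functions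
  have hmeasν : Measurable fun t : ℝ => ν {a | t < φ a} := by
    apply Antitone.measurable
    intro s t hst
    exact measure_mono fun a ha => lt_of_le_of_lt hst ha
  -- pointwise bound and integration over Ioc 0 1
  have hbound : ∫⁻ t in Set.Ioc (0 : ℝ) 1, μ {a | t < φ a}
      ≤ ENNReal.ofReal (Real.exp ε) * (∫⁻ t in Set.Ioc (0 : ℝ) 1, ν {a | t < φ a})
        + ENNReal.ofReal δ := by
    have h1 : ∫⁻ t in Set.Ioc (0 : ℝ) 1, μ {a | t < φ a}
        ≤ ∫⁻ t in Set.Ioc (0 : ℝ) 1,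
            (ENNReal.ofReal (Real.exp ε) * ν {a | t < φ a} + ENNReal.ofReal δ) :=
      lintegral_mono fun t => h _ (hφ measurableSet_Ioi)
    refine h1.trans (le_of_eq ?_)
    rw [lintegral_add_right _ measurable_const, lintegral_const_mul _ hmeasν]
    congr 1
    simp [Real.volume_Ioc]
  have hIocν : ∫⁻ t in Set.Ioc (0 : ℝ) 1, ν {a | t < φ a}
      ≤ ∫⁻ t in Set.Ioi (0 : ℝ), ν {a | t < φ a} :=
    lintegral_mono_set Set.Ioc_subset_Ioi_self
  have hmain : ∫⁻ ω, ENNReal.ofReal (φ ω) ∂μ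
      ≤ ENNReal.ofReal (Real.exp ε) * ∫⁻ ω, ENNReal.ofReal (φ ω) ∂ν
        + ENNReal.ofReal δ := by
    rw [hlayμ, hlayν, hsplitμ]
    exact hbound.trans (by gcongr)
  -- finiteness
  have hν1 : ∫⁻ ω, ENNReal.ofReal (φ ω) ∂ν ≤ 1 := by
    calc ∫⁻ ω, ENNReal.ofReal (φ ω) ∂ν ≤ ∫⁻ _, 1 ∂ν :=
          lintegral_mono fun ω => ENNReal.ofReal_le_one.2 (hφ01 ω).2
      _ = 1 := by simp
  have hνfin : ∫⁻ ω, ENNReal.ofReal (φ ω) ∂ν ≠ ⊤ :=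
    ne_top_of_le_ne_top ENNReal.one_ne_top hν1
  have hrhsfin : ENNReal.ofReal (Real.exp ε) * ∫⁻ ω, ENNReal.ofReal (φ ω) ∂ν
      + ENNReal.ofReal δ ≠ ⊤ := by
    apply ENNReal.add_ne_top.2
    exact ⟨ENNReal.mul_ne_top ENNReal.ofReal_ne_top hνfin, ENNReal.ofReal_ne_top⟩
  have hμint : ∫ ω, φ ω ∂μ = (∫⁻ ω, ENNReal.ofReal (φ ω) ∂μ).toReal :=
    integral_eq_lintegral_of_nonneg_ae hnnμ hφ.aestronglyMeasurable
  have hνint : ∫ ω, φ ω ∂ν = (∫⁻ ω, ENNReal.ofReal (φ ω) ∂ν).toReal :=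
    integral_eq_lintegral_of_nonneg_ae hnnν hφ.aestronglyMeasurable
  rw [hμint, hνint]
  calc (∫⁻ ω, ENNReal.ofReal (φ ω) ∂μ).toReal
      ≤ (ENNReal.ofReal (Real.exp ε) * ∫⁻ ω, ENNReal.ofReal (φ ω) ∂ν
          + ENNReal.ofReal δ).toReal := ENNReal.toReal_mono hrhsfin hmain
    _ = Real.exp ε * (∫⁻ ω, ENNReal.ofReal (φ ω) ∂ν).toReal + δ := by
        rw [ENNReal.toReal_add (ENNReal.mul_ne_top ENNReal.ofReal_ne_top hνfin)
          ENNReal.ofReal_ne_top, ENNReal.toReal_mul,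
          ENNReal.toReal_ofReal (Real.exp_pos ε).le, ENNReal.toReal_ofReal hδ]

lemma test_integrable {Ω : Type*} [MeasurableSpace Ω] {μ : Measure Ω}
    [IsProbabilityMeasure μ] {φ : Ω → ℝ} (hφ : Measurable φ)
    (hφ01 : ∀ ω, φ ω ∈ Set.Icc (0 : ℝ) 1) : Integrable φ μ := by
  refine Integrable.mono' (integrable_const 1) hφ.aestronglyMeasurable ?_
  exact ae_of_all _ fun ω => by
    rw [Real.norm_eq_abs, abs_le]
    exact ⟨by linarith [(hφ01 ω).1], (hφ01 ω).2⟩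

/-- Indistinguishability in both orders implies the trade-off bound for `(P, P')`. -/
lemma indist_to_tradeoff {Ω : Type*} [MeasurableSpace Ω] {ε δ : ℝ} (hδ0 : 0 ≤ δ)
    {P P' : Measure Ω} [IsProbabilityMeasure P] [IsProbabilityMeasure P']
    (hPP' : Indist ε δ P P') (hP'P : Indist ε δ P' P) :
    SatisfiesTradeoff P P'
      (fun x => max 0 (max (1 - δ - Real.exp ε * x)
        (Real.exp (-ε) * (1 - δ - x)))) := by
  intro φ hφ hφ01
  have hintP : Integrable φ P := test_integrable hφ hφ01
  have hintP' : Integrable φ P' := test_integrable hφ hφ01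
  have hsub : ∫ ω, (1 - φ ω) ∂P' = 1 - ∫ ω, φ ω ∂P' := by
    rw [integral_sub (integrable_const 1) hintP']
    simp
  have hβle : ∫ ω, φ ω ∂P' ≤ 1 := by
    calc ∫ ω, φ ω ∂P' ≤ ∫ _, (1 : ℝ) ∂P' :=
          integral_mono hintP' (integrable_const 1) fun ω => (hφ01 ω).2
      _ = 1 := by simp
  -- first key: ∫ φ dP' ≤ e^ε ∫ φ dP + δ
  have hkey1 : ∫ ω, φ ω ∂P' ≤ Real.exp ε * ∫ ω, φ ω ∂P + δ :=
    indist_integral hδ0 hP'P hφ hφ01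
  -- second key: ∫ (1-φ) dP ≤ e^ε ∫ (1-φ) dP' + δ
  have hψ : Measurable fun ω => 1 - φ ω := measurable_const.sub hφ
  have hψ01 : ∀ ω, (1 - φ ω) ∈ Set.Icc (0 : ℝ) 1 := fun ω =>
    ⟨by linarith [(hφ01 ω).2], by linarith [(hφ01 ω).1]⟩
  have hkey2 : ∫ ω, (1 - φ ω) ∂P ≤ Real.exp ε * ∫ ω, (1 - φ ω) ∂P' + δ :=
    indist_integral hδ0 hPP' hψ hψ01
  have hsubP : ∫ ω, (1 - φ ω) ∂P = 1 - ∫ ω, φ ω ∂P := by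
    rw [integral_sub (integrable_const 1) hintP]
    simp
  rw [hsub]
  rw [hsubP, hsub] at hkey2
  set α := ∫ ω, φ ω ∂P
  set β := ∫ ω, φ ω ∂P'
  refine max_le (by linarith) (max_le (by linarith) ?_)
  have hexp : Real.exp (-ε) * Real.exp ε = 1 := by
    rw [← Real.exp_add]; simp
  have h2 : 1 - δ - α ≤ Real.exp ε * (1 - β) := by linarith
  have := mul_le_mul_of_nonneg_left h2 (Real.exp_pos (-ε)).le
  calc Real.exp (-ε) * (1 - δ - α) ≤ Real.exp (-ε) * (Real.exp ε * (1 - β)) := this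
    _ = 1 - β := by rw [← mul_assoc, hexp, one_mul]

/-- The trade-off bound for `(P, P')` implies `Indist ε δ P' P`. -/
lemma tradeoff_to_indist {Ω : Type*} [MeasurableSpace Ω] {ε δ : ℝ} (hδ0 : 0 ≤ δ)
    {P P' : Measure Ω} [IsProbabilityMeasure P] [IsProbabilityMeasure P']
    (hT : SatisfiesTradeoff P P'
      (fun x => max 0 (max (1 - δ - Real.exp ε * x)
        (Real.exp (-ε) * (1 - δ - x))))) :
    Indist ε δ P' P := by
  intro S hS
  have hφ : Measurable (S.indicator (fun _ => (1 : ℝ))) :=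
    measurable_const.indicator hS
  have hφ01 : ∀ ω, S.indicator (fun _ => (1 : ℝ)) ω ∈ Set.Icc (0 : ℝ) 1 := by
    intro ω
    by_cases hω : ω ∈ S <;> simp [Set.indicator_apply, hω]
  have := hT _ hφ hφ01
  have hIP : ∫ ω, S.indicator (fun _ => (1 : ℝ)) ω ∂P = (P S).toReal := by
    rw [integral_indicator hS]; simp; rfl
  have hIP' : ∫ ω, (1 - S.indicator (fun _ => (1 : ℝ)) ω) ∂P'
      = 1 - (P' S).toReal := by
    rw [integral_sub (integrable_const 1)]
    · rw [integral_indicator hS]; simp; rfl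
    · exact test_integrable hφ hφ01
  rw [hIP, hIP'] at this
  have h1 : 1 - δ - Real.exp ε * (P S).toReal ≤ 1 - (P' S).toReal :=
    le_trans (le_max_left _ _) (le_trans (le_max_right _ _) this)
  have hreal : (P' S).toReal ≤ Real.exp ε * (P S).toReal + δ := by linarith
  have hfin : P' S ≠ ⊤ := (measure_lt_top P' S).ne
  calc P' S = ENNReal.ofReal ((P' S).toReal) := (ENNReal.ofReal_toReal hfin).symm
    _ ≤ ENNReal.ofReal (Real.exp ε * (P S).toReal + δ) := ENNReal.ofReal_le_ofReal hreal
    _ ≤ ENNReal.ofReal (Real.exp ε * (P S).toReal) + ENNReal.ofReal δ :=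
        ENNReal.ofReal_add_le
    _ = ENNReal.ofReal (Real.exp ε) * P S + ENNReal.ofReal δ := by
        rw [ENNReal.ofReal_mul (Real.exp_pos ε).le,
          ENNReal.ofReal_toReal (measure_lt_top P S).ne]

/-- `(ε,δ)`-DP equals `f_{ε,δ}`-DP. For `ε ≥ 0`, `δ ∈ [0,1]`, and
probability measures `P`, `P'` with `f_{ε,δ}(x) = max(0, 1−δ−e^ε·x, e^{−ε}(1−δ−x))`,
the pair is `(ε,δ)`-indistinguishable in both orders iff both `(P,P')` and `(P',P)`
satisfy the trade-off bound `f_{ε,δ}`. -/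
theorem stmt_11 {Ω : Type*} [MeasurableSpace Ω] (ε δ : ℝ) (hε : 0 ≤ ε)
    (hδ : δ ∈ Set.Icc (0 : ℝ) 1)
    (P P' : Measure Ω) [IsProbabilityMeasure P] [IsProbabilityMeasure P'] :
    (Indist ε δ P P' ∧ Indist ε δ P' P) ↔
      (SatisfiesTradeoff P P'
          (fun x => max 0 (max (1 - δ - Real.exp ε * x)
            (Real.exp (-ε) * (1 - δ - x)))) ∧
        SatisfiesTradeoff P' P
          (fun x => max 0 (max (1 - δ - Real.exp ε * x)
            (Real.exp (-ε) * (1 - δ - x))))) := by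
  obtain ⟨hδ0, hδ1⟩ := hδ
  constructor
  · rintro ⟨h1, h2⟩
    exact ⟨indist_to_tradeoff hδ0 h1 h2, indist_to_tradeoff hδ0 h2 h1⟩
  · rintro ⟨h1, h2⟩
    exact ⟨tradeoff_to_indist hδ0 h2, tradeoff_to_indist hδ0 h1⟩
end

section
/- Let P п P' be probability measures on a measurable space, both absolutely continuous with respect to a common σ-finite measure μ, with respective densities p and p'. Define the privacy loss function ℓ(o) = log(p(o)/p'(o)), with the convention ℓ(o) = +∞ when p'(o) = 0 < p(o). Then for every ε ≥ 0 and δ ≥ 0, the inequality P(S) ≤ e^ε·P'(S) + δ holds for every measurable set S if and only if ∫_ε^∞ e^{ε−z}·P({o : ℓ(o) > z}) dz ≤ δ. -/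
open MeasureTheory
open scoped ENNReal

section Helpers
open Set Real

-- integral of exp(ε - z) over Ioi ε is 1
lemma hIoi (ε : ℝ) : ∫⁻ z in Set.Ioi ε, ENNReal.ofReal (Real.exp (ε - z)) = 1 := by
  have hint : IntegrableOn (fun z => Real.exp (ε - z)) (Set.Ioi ε) := by
    have := (exp_neg_integrableOn_Ioi ε one_pos).const_mul (Real.exp ε)
    simp [Real.exp_sub, Real.exp_neg, div_eq_mul_inv, neg_mul, one_mul] at this ⊢; exact this
  rw [← ofReal_integral_eq_lintegral_ofReal hint
    (Filter.Eventually.of_forall fun z => (Real.exp_pos _).le)]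
  have : ∫ z in Set.Ioi ε, Real.exp (ε - z) = 1 := by
    have h1 : ∀ z : ℝ, Real.exp (ε - z) = Real.exp ε * Real.exp (-z) := by
      intro z; rw [← Real.exp_add]; ring_nf
    simp_rw [h1]
    rw [MeasureTheory.integral_const_mul, integral_exp_neg_Ioi, ← Real.exp_add]
    simp
  rw [this]; simp

lemma hIoo (ε t : ℝ) (h : ε ≤ t) :
    ∫⁻ z in Set.Ioo ε t, ENNReal.ofReal (Real.exp (ε - z)) =
      ENNReal.ofReal (1 - Real.exp (ε - t)) := by
  have hint : IntegrableOn (fun z => Real.exp (ε - z)) (Set.Ioo ε t) := by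
    have hc : IntegrableOn (fun z => Real.exp (ε - z)) (Set.Icc ε t) :=
      ContinuousOn.integrableOn_compact isCompact_Icc
        (Real.continuous_exp.comp (continuous_const.sub continuous_id)).continuousOn
    exact hc.mono_set Set.Ioo_subset_Icc_self
  rw [← ofReal_integral_eq_lintegral_ofReal hint
    (Filter.Eventually.of_forall fun z => (Real.exp_pos _).le)]
  congr 1
  rw [← MeasureTheory.integral_Ioc_eq_integral_Ioo, ← intervalIntegral.integral_of_le h]
  rw [intervalIntegral.integral_comp_sub_left (fun x => Real.exp x) ε]
  rw [integral_exp]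
  simp

lemma zint (ε a b : ℝ) (ha : 0 ≤ a) (hb : 0 ≤ b) :
    (∫⁻ z in Set.Ioi ε, if Real.exp z * b < a then
        ENNReal.ofReal (Real.exp (ε - z)) * ENNReal.ofReal a else 0)
      = ENNReal.ofReal (a - Real.exp ε * b) := by
  have hmeas : Measurable fun z : ℝ => ENNReal.ofReal (Real.exp (ε - z)) :=
    ENNReal.measurable_ofReal.comp (Real.measurable_exp.comp (measurable_const.sub measurable_id))
  have hT : MeasurableSet {z : ℝ | Real.exp z * b < a} :=
    measurableSet_lt (Real.measurable_exp.mul_const b) measurable_const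
  have hind : (fun z => if Real.exp z * b < a then
      ENNReal.ofReal (Real.exp (ε - z)) * ENNReal.ofReal a else 0) =
      ({z : ℝ | Real.exp z * b < a}).indicator
        (fun z => ENNReal.ofReal (Real.exp (ε - z)) * ENNReal.ofReal a) := by
    funext z; simp [Set.indicator_apply, Set.mem_setOf_eq]
  rw [hind]
  simp only [lintegral_indicator hT _]
  rw [Measure.restrict_restrict hT]
  rcases eq_or_lt_of_le hb with hb0 | hbpos
  · -- b = 0
    rcases eq_or_lt_of_le ha with ha0 | hapos
    · -- a = 0
      have : {z : ℝ | Real.exp z * b < a} = ∅ := by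
        ext z; simp [← hb0, ← ha0]
      simp [this, ← ha0, ← hb0]
    · -- a > 0
      have : {z : ℝ | Real.exp z * b < a} = Set.univ := by
        ext z; simp [← hb0, hapos]
      rw [this, Set.univ_inter, lintegral_mul_const _ hmeas, hIoi, one_mul, ← hb0]
      simp
  · -- b > 0
    rcases eq_or_lt_of_le ha with ha0 | hapos
    · -- a = 0
      have h1 : {z : ℝ | Real.exp z * b < a} = ∅ := by
        ext z; simp only [Set.mem_setOf_eq, Set.mem_empty_iff_false, iff_false, not_lt, ← ha0]
        positivity
      have h2 : a - Real.exp ε * b ≤ 0 := by nlinarith [Real.exp_pos ε]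
      simp [h1, ENNReal.ofReal_eq_zero.mpr h2]
    · -- a > 0, b > 0
      have hab : 0 < a / b := div_pos hapos hbpos
      set t := Real.log (a / b) with ht
      have hTeq : {z : ℝ | Real.exp z * b < a} = Set.Iio t := by
        ext z
        simp only [Set.mem_setOf_eq, Set.mem_Iio, ht]
        rw [Real.lt_log_iff_exp_lt hab, lt_div_iff₀ hbpos]
      rw [hTeq]
      have hinter : Set.Iio t ∩ Set.Ioi ε = Set.Ioo ε t := by
        rw [Set.inter_comm, Set.Ioi_inter_Iio]
      rw [hinter]
      rcases le_or_gt t ε with hle | hlt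
      · rw [Set.Ioo_eq_empty (by exact fun hlt' => absurd hle (not_le.mpr hlt'))]
        have h2 : a - Real.exp ε * b ≤ 0 := by
          have : a / b ≤ Real.exp ε := (Real.log_le_iff_le_exp hab).mp hle
          rw [div_le_iff₀ hbpos] at this
          linarith
        simp [ENNReal.ofReal_eq_zero.mpr h2]
      · rw [lintegral_mul_const _ hmeas, hIoo ε t hlt.le]
        have het : Real.exp (ε - t) = Real.exp ε * b / a := by
          rw [Real.exp_sub, ht, Real.exp_log hab]
          field_simp
        rw [het, ← ENNReal.ofReal_mul (by
          have : Real.exp ε * b / a ≤ 1 := by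
            rw [div_le_one hapos]
            have : Real.exp ε < a / b := by
              rw [← Real.exp_log hab]; exact Real.exp_lt_exp.mpr hlt
            rw [lt_div_iff₀ hbpos] at this; linarith
          linarith)]
        congr 1
        field_simp

lemma swap_eq {Ω : Type*} [MeasurableSpace Ω] (μ : Measure Ω) [SigmaFinite μ]
    (p p' : Ω → ℝ) (hp0 : ∀ o, 0 ≤ p o) (hp'0 : ∀ o, 0 ≤ p' o)
    (hpm : Measurable p) (hp'm : Measurable p') (ε : ℝ) :
    ∫⁻ z in Set.Ioi ε, ENNReal.ofReal (Real.exp (ε - z)) *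
        (μ.withDensity fun o => ENNReal.ofReal (p o)) {o | Real.exp z * p' o < p o}
      = ∫⁻ o, ENNReal.ofReal (p o - Real.exp ε * p' o) ∂μ := by
  have hSz : ∀ z : ℝ, MeasurableSet {o | Real.exp z * p' o < p o} :=
    fun z => measurableSet_lt (hp'm.const_mul _) hpm
  set F : ℝ → Ω → ℝ≥0∞ := fun z o => if Real.exp z * p' o < p o then
    ENNReal.ofReal (Real.exp (ε - z)) * ENNReal.ofReal (p o) else 0 with hF
  have hFinner : ∀ z : ℝ, Measurable fun o => (if Real.exp z * p' o < p o then
      ENNReal.ofReal (p o) else 0 : ℝ≥0∞) := fun z =>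
    Measurable.ite (hSz z) (ENNReal.measurable_ofReal.comp hpm) measurable_const
  have step1 : ∀ z : ℝ, ENNReal.ofReal (Real.exp (ε - z)) *
      (μ.withDensity fun o => ENNReal.ofReal (p o)) {o | Real.exp z * p' o < p o}
      = ∫⁻ o, F z o ∂μ := by
    intro z
    rw [withDensity_apply _ (hSz z)]
    have : ∫⁻ o in {o | Real.exp z * p' o < p o}, ENNReal.ofReal (p o) ∂μ
        = ∫⁻ o, (if Real.exp z * p' o < p o then ENNReal.ofReal (p o) else 0) ∂μ := by
      rw [← lintegral_indicator (hSz z)]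
      apply lintegral_congr; intro o; simp [Set.indicator_apply, Set.mem_setOf_eq]
    rw [this, ← lintegral_const_mul _ (hFinner z)]
    apply lintegral_congr; intro o
    by_cases ho : Real.exp z * p' o < p o <;> simp [hF, ho]
  have hcalc1 : (∫⁻ z in Set.Ioi ε, ENNReal.ofReal (Real.exp (ε - z)) *
      (μ.withDensity fun o => ENNReal.ofReal (p o)) {o | Real.exp z * p' o < p o})
      = ∫⁻ z in Set.Ioi ε, ∫⁻ o, F z o ∂μ := by
    apply lintegral_congr; intro z; exact step1 z
  rw [hcalc1]
  have hFm : AEMeasurable (Function.uncurry F) ((volume.restrict (Set.Ioi ε)).prod μ) := by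
    have hset : MeasurableSet {q : ℝ × Ω | Real.exp q.1 * p' q.2 < p q.2} :=
      measurableSet_lt ((Real.measurable_exp.comp measurable_fst).mul
        (hp'm.comp measurable_snd)) (hpm.comp measurable_snd)
    have : Function.uncurry F = fun q : ℝ × Ω => if Real.exp q.1 * p' q.2 < p q.2 then
        ENNReal.ofReal (Real.exp (ε - q.1)) * ENNReal.ofReal (p q.2) else 0 := rfl
    rw [this]
    exact (Measurable.ite hset
      ((ENNReal.measurable_ofReal.comp (Real.measurable_exp.comp
        (measurable_const.sub measurable_fst))).mul
        (ENNReal.measurable_ofReal.comp (hpm.comp measurable_snd)))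
      measurable_const).aemeasurable
  rw [lintegral_lintegral_swap hFm]
  apply lintegral_congr; intro o
  exact zint ε (p o) (p' o) (hp0 o) (hp'0 o)

end Helpers

/-- let `P`, `P'` be probability measures on a measurable space, both
absolutely continuous w.r.t. a common σ-finite measure `μ`, with densities `p`, `p'`.
With the privacy loss `ℓ(o) = log(p(o)/p'(o))` (convention `+∞` when `p'(o) = 0 < p(o)`;
the superlevel set `{o : ℓ(o) > z}` is encoded as `{o : p(o) > e^z·p'(o)}`), for every
`ε ≥ 0` and `δ ≥ 0`: `P(S) ≤ e^ε·P'(S) + δ` for every measurable `S` iff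
`∫_ε^∞ e^{ε−z}·P({o : ℓ(o) > z}) dz ≤ δ`. -/
theorem stmt_12 {Ω : Type*} [MeasurableSpace Ω] (μ : Measure Ω) [SigmaFinite μ]
    (p p' : Ω → ℝ) (hp0 : ∀ o, 0 ≤ p o) (hp'0 : ∀ o, 0 ≤ p' o)
    (hpm : Measurable p) (hp'm : Measurable p')
    (P P' : Measure Ω) [IsProbabilityMeasure P] [IsProbabilityMeasure P']
    (hP : P = μ.withDensity fun o => ENNReal.ofReal (p o))
    (hP' : P' = μ.withDensity fun o => ENNReal.ofReal (p' o))
    (ε δ : ℝ) (hε : 0 ≤ ε) (hδ : 0 ≤ δ) :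
    (∀ S : Set Ω, MeasurableSet S →
        P S ≤ ENNReal.ofReal (Real.exp ε) * P' S + ENNReal.ofReal δ) ↔
      ∫⁻ z in Set.Ioi ε, ENNReal.ofReal (Real.exp (ε - z)) *
          P {o | Real.exp z * p' o < p o} ≤ ENNReal.ofReal δ := by
  have hswap := swap_eq μ p p' hp0 hp'0 hpm hp'm ε
  rw [hP, hP', hswap]
  set I := ∫⁻ o, ENNReal.ofReal (p o - Real.exp ε * p' o) ∂μ with hI
  have hgm : Measurable fun o => ENNReal.ofReal (p o - Real.exp ε * p' o) :=
    ENNReal.measurable_ofReal.comp (hpm.sub (hp'm.const_mul _))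
  have hp'em : Measurable fun o => ENNReal.ofReal (Real.exp ε) * ENNReal.ofReal (p' o) :=
    (ENNReal.measurable_ofReal.comp hp'm).const_mul _
  constructor
  · intro h
    set S := {o | Real.exp ε * p' o < p o} with hSdef
    have hS : MeasurableSet S := measurableSet_lt (hp'm.const_mul _) hpm
    have hIS : ∫⁻ o in S, ENNReal.ofReal (p o - Real.exp ε * p' o) ∂μ = I := by
      rw [hI, ← lintegral_indicator hS]
      apply lintegral_congr; intro o
      by_cases ho : o ∈ S
      · simp [Set.indicator_apply, ho]
      · have : p o - Real.exp ε * p' o ≤ 0 := by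
          simp only [hSdef, Set.mem_setOf_eq, not_lt] at ho; linarith
        simp [Set.indicator_apply, ho, ENNReal.ofReal_eq_zero.mpr this]
    have heq : (μ.withDensity fun o => ENNReal.ofReal (p o)) S
        = ENNReal.ofReal (Real.exp ε) * (μ.withDensity fun o => ENNReal.ofReal (p' o)) S + I := by
      rw [withDensity_apply _ hS, withDensity_apply _ hS]
      have hpt : ∀ o ∈ S, ENNReal.ofReal (p o)
          = ENNReal.ofReal (Real.exp ε) * ENNReal.ofReal (p' o)
            + ENNReal.ofReal (p o - Real.exp ε * p' o) := by
        intro o ho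
        rw [← ENNReal.ofReal_mul (Real.exp_pos ε).le,
          ← ENNReal.ofReal_add (mul_nonneg (Real.exp_pos ε).le (hp'0 o)) (by
            simp only [hSdef, Set.mem_setOf_eq] at ho; linarith)]
        congr 1; ring
      rw [setLIntegral_congr_fun hS hpt,
        lintegral_add_left hp'em, lintegral_const_mul _ hp'm.ennreal_ofReal,
        hIS]
    specialize h S hS
    rw [heq] at h
    exact (ENNReal.add_le_add_iff_left
      (ENNReal.mul_ne_top ENNReal.ofReal_ne_top (by rw [← hP']; exact measure_ne_top _ S))).mp h
  · intro h S hS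
    have hkey : (μ.withDensity fun o => ENNReal.ofReal (p o)) S
        ≤ ENNReal.ofReal (Real.exp ε) * (μ.withDensity fun o => ENNReal.ofReal (p' o)) S
          + ∫⁻ o in S, ENNReal.ofReal (p o - Real.exp ε * p' o) ∂μ := by
      rw [withDensity_apply _ hS, withDensity_apply _ hS,
        ← lintegral_const_mul _ hp'm.ennreal_ofReal,
        ← lintegral_add_left hp'em]
      apply lintegral_mono; intro o
      calc ENNReal.ofReal (p o)
          = ENNReal.ofReal (Real.exp ε * p' o + (p o - Real.exp ε * p' o)) := by ring_nf
        _ ≤ ENNReal.ofReal (Real.exp ε * p' o) + ENNReal.ofReal (p o - Real.exp ε * p' o) :=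
            ENNReal.ofReal_add_le
        _ = ENNReal.ofReal (Real.exp ε) * ENNReal.ofReal (p' o)
            + ENNReal.ofReal (p o - Real.exp ε * p' o) := by
            rw [ENNReal.ofReal_mul (Real.exp_pos ε).le]
    calc (μ.withDensity fun o => ENNReal.ofReal (p o)) S
        ≤ ENNReal.ofReal (Real.exp ε) * (μ.withDensity fun o => ENNReal.ofReal (p' o)) S
          + ∫⁻ o in S, ENNReal.ofReal (p o - Real.exp ε * p' o) ∂μ := hkey
      _ ≤ ENNReal.ofReal (Real.exp ε) * (μ.withDensity fun o => ENNReal.ofReal (p' o)) S + I :=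
          add_le_add_right (setLIntegral_le_lintegral _ _) _
      _ ≤ _ + ENNReal.ofReal δ := add_le_add_right h _
end
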